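/- arXiv:1207.4696 — 5 statements merged into one kernel-verified Lean document; each statement's English description precedes it below -/
import Mathlib

section
/- Let Λ ⊂ [0,∞) be a set such that #{λ ∈ Λ : λ ≤ X} ≍ X^{3/2}. Fix ε ∈ (0, 1/2). Then the set B̃ = {λ ∈ Λ : λ ≥ 1 and (λ, λ + λ^{−1/2+ε}) ∩ Λ = ∅} satisfies #{λ ∈ B̃ : λ ≤ X} ≤ X^{3/2−ε}; in particular B̃ has density zero in Λ. -/
open Set

lemma card_mul_le_of_separated (s : Finset ℝ) (δ a b : ℝ) (hδ : 0 < δ) (hab : a ≤ b)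
    (hmem : ∀ x ∈ s, a ≤ x ∧ x + δ ≤ b)
    (hsep : ∀ x ∈ s, ∀ y ∈ s, x < y → x + δ ≤ y) :
    (s.card : ℝ) * δ ≤ b - a := by
  have hdisj : (↑s : Set ℝ).PairwiseDisjoint (fun x => Set.Ico x (x + δ)) := by
    intro x hx y hy hxy
    rcases lt_or_gt_of_ne hxy with h | h
    · have h' := hsep x (by simpa using hx) y (by simpa using hy) h
      exact Set.Ico_disjoint_Ico.mpr (by simp only [min_le_iff, le_max_iff]; tauto)
    · have h' := hsep y (by simpa using hy) x (by simpa using hx) h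
      exact Set.Ico_disjoint_Ico.mpr (by simp only [min_le_iff, le_max_iff]; tauto)
  have hmeas := MeasureTheory.measure_biUnion_finset (μ := MeasureTheory.volume) hdisj
    (fun x _ => measurableSet_Ico)
  have hsub : (⋃ x ∈ s, Set.Ico x (x + δ)) ⊆ Set.Ico a b := by
    intro z hz
    simp only [Set.mem_iUnion] at hz
    obtain ⟨x, hx, hz⟩ := hz
    exact ⟨le_trans (hmem x hx).1 hz.1, lt_of_lt_of_le hz.2 (hmem x hx).2⟩
  have hle := MeasureTheory.measure_mono (μ := MeasureTheory.volume) hsub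
  rw [hmeas] at hle
  have hvol : ∀ x : ℝ, MeasureTheory.volume (Set.Ico x (x + δ)) = ENNReal.ofReal δ := by
    intro x; rw [Real.volume_Ico]; ring_nf
  simp only [hvol, Finset.sum_const, nsmul_eq_mul, Real.volume_Ico] at hle
  have h2 : ENNReal.ofReal ((s.card : ℝ) * δ) ≤ ENNReal.ofReal (b - a) := by
    rw [ENNReal.ofReal_mul (by positivity), ENNReal.ofReal_natCast]
    exact hle
  exact (ENNReal.ofReal_le_ofReal_iff (by linarith)).mp h2

/-- If #{λ ∈ Λ : λ ≤ X} ≍ X^{3/2} and 0 < ε < 1/2, then the set of λ ∈ Λ, λ ≥ 1,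
whose interval (λ, λ + λ^{−1/2+ε}) contains no element of Λ, has at most X^{3/2−ε}
elements up to X; in particular it has density zero in Λ. -/
theorem stmt_8 (Λ : Set ℝ) (hΛ : Λ ⊆ Set.Ici (0 : ℝ))
    (c₁ c₂ : ℝ) (hc₁ : 0 < c₁) (hc₂ : 0 < c₂)
    (hcount : ∀ X : ℝ, 1 ≤ X →
      c₁ * X ^ ((3 : ℝ) / 2) ≤ ({l ∈ Λ | l ≤ X}.ncard : ℝ) ∧
      ({l ∈ Λ | l ≤ X}.ncard : ℝ) ≤ c₂ * X ^ ((3 : ℝ) / 2))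
    (ε : ℝ) (hε : 0 < ε) (hε' : ε < 1 / 2) :
    (∀ X : ℝ, 1 ≤ X →
      ({l ∈ {l ∈ Λ | 1 ≤ l ∧ Set.Ioo l (l + l ^ (-(1 : ℝ) / 2 + ε)) ∩ Λ = ∅} |
        l ≤ X}.ncard : ℝ) ≤ X ^ ((3 : ℝ) / 2 - ε)) ∧
    Filter.Tendsto
      (fun X : ℝ =>
        ({l ∈ {l ∈ Λ | 1 ≤ l ∧ Set.Ioo l (l + l ^ (-(1 : ℝ) / 2 + ε)) ∩ Λ = ∅} |
          l ≤ X}.ncard : ℝ) / ({l ∈ Λ | l ≤ X}.ncard : ℝ))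
      Filter.atTop (nhds 0) := by
  set e : ℝ := -(1 : ℝ) / 2 + ε with he
  have he0 : e ≤ 0 := by rw [he]; linarith
  set B : Set ℝ := {l ∈ Λ | 1 ≤ l ∧ Set.Ioo l (l + l ^ e) ∩ Λ = ∅} with hB
  -- finiteness of Λ ∩ [0, X]
  have hfinΛ : ∀ X : ℝ, 1 ≤ X → {l ∈ Λ | l ≤ X}.Finite := by
    intro X hX
    by_contra h
    have h0 : {l ∈ Λ | l ≤ X}.ncard = 0 := Set.Infinite.ncard h
    have h1 := (hcount X hX).1
    rw [h0] at h1
    have : (0 : ℝ) < c₁ * X ^ ((3 : ℝ) / 2) := by positivity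
    simp at h1; linarith
  have hfinB : ∀ X : ℝ, 1 ≤ X → {l ∈ B | l ≤ X}.Finite := by
    intro X hX
    refine (hfinΛ X hX).subset ?_
    rintro l ⟨⟨hlΛ, _, _⟩, hlX⟩
    exact ⟨hlΛ, hlX⟩
  -- the key counting bound
  have key : ∀ X : ℝ, 1 ≤ X → (({l ∈ B | l ≤ X}).ncard : ℝ) ≤ X ^ ((3 : ℝ) / 2 - ε) := by
    intro X hX
    have hXpos : (0 : ℝ) < X := by linarith
    set δ : ℝ := X ^ e with hδdef
    have hδ : 0 < δ := Real.rpow_pos_of_pos hXpos e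
    have hδ1 : δ ≤ 1 := Real.rpow_le_one_of_one_le_of_nonpos hX he0
    set s : Finset ℝ := (hfinB X hX).toFinset with hs
    have hmem : ∀ x ∈ s, (1 : ℝ) ≤ x ∧ x + δ ≤ X + δ := by
      intro x hx
      rw [hs, Set.Finite.mem_toFinset] at hx
      exact ⟨hx.1.2.1, by linarith [hx.2]⟩
    have hsep : ∀ x ∈ s, ∀ y ∈ s, x < y → x + δ ≤ y := by
      intro x hx y hy hxy
      rw [hs, Set.Finite.mem_toFinset] at hx hy
      obtain ⟨⟨hxΛ, hx1, hxempty⟩, hxX⟩ := hx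
      obtain ⟨⟨hyΛ, _, _⟩, _⟩ := hy
      have hynot : y ∉ Set.Ioo x (x + x ^ e) := by
        intro hmem
        have : y ∈ Set.Ioo x (x + x ^ e) ∩ Λ := ⟨hmem, hyΛ⟩
        rw [hxempty] at this
        exact this
      have hxe : δ ≤ x ^ e := Real.rpow_le_rpow_of_nonpos (by linarith) hxX he0
      by_contra hcon
      push_neg at hcon
      exact hynot ⟨hxy, by linarith⟩
    have hcard := card_mul_le_of_separated s δ 1 (X + δ) hδ (by linarith) hmem hsep
    have hcard2 : (s.card : ℝ) * δ ≤ X := by linarith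
    have hne : (({l ∈ B | l ≤ X}).ncard : ℝ) = (s.card : ℝ) := by
      rw [hs, Set.ncard_eq_toFinset_card _ (hfinB X hX)]
    rw [hne]
    rw [← le_div_iff₀ hδ] at hcard2
    refine le_trans hcard2 (le_of_eq ?_)
    rw [hδdef, show (3 : ℝ) / 2 - ε = 1 - e by rw [he]; ring,
      Real.rpow_sub hXpos, Real.rpow_one]
  refine ⟨key, ?_⟩
  apply squeeze_zero' (g := fun X => c₁⁻¹ * X ^ (-ε))
  · filter_upwards [Filter.eventually_ge_atTop (1 : ℝ)] with X hX
    positivity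
  · filter_upwards [Filter.eventually_ge_atTop (1 : ℝ)] with X hX
    have hXpos : (0 : ℝ) < X := by linarith
    have hΛpos : (0 : ℝ) < c₁ * X ^ ((3 : ℝ) / 2) := by positivity
    have hΛlow := (hcount X hX).1
    have h1 : (({l ∈ B | l ≤ X}).ncard : ℝ) / ({l ∈ Λ | l ≤ X}.ncard : ℝ)
        ≤ X ^ ((3 : ℝ) / 2 - ε) / (c₁ * X ^ ((3 : ℝ) / 2)) :=
      div_le_div₀ (by positivity) (key X hX) hΛpos hΛlow
    refine le_trans h1 (le_of_eq ?_)
    rw [show ((3 : ℝ) / 2 - ε) = (3 : ℝ) / 2 + (-ε) by ring, Real.rpow_add hXpos]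
    have hne : X ^ ((3 : ℝ) / 2) ≠ 0 := by positivity
    field_simp
  · have := (tendsto_rpow_neg_atTop hε).const_mul (c₁⁻¹)
    simpa using this
end

section
/- Let D > 0 be a squarefree integer and k a positive integer. Then the number of integer solutions (x,y) to x² + D y² = k is at most 6·τ(k), where τ(k) is the number of positive divisors of k. -/
open Finset

namespace Stmt9Aux

/-- Solutions of x^2 + D y^2 = k as a Finset. -/
noncomputable def solF (D k : ℕ) : Finset (ℤ × ℤ) :=
  ((Finset.Icc (-(k:ℤ)) (k:ℤ)) ×ˢ (Finset.Icc (-(k:ℤ)) (k:ℤ))).filter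
    (fun p => p.1 ^ 2 + (D:ℤ) * p.2 ^ 2 = (k:ℤ))

lemma mem_solF {D k : ℕ} (hD : 0 < D) {p : ℤ × ℤ} :
    p ∈ solF D k ↔ p.1 ^ 2 + (D:ℤ) * p.2 ^ 2 = (k:ℤ) := by
  constructor
  · intro h; exact (Finset.mem_filter.mp h).2
  · intro h
    refine Finset.mem_filter.mpr ⟨?_, h⟩
    have h1 : p.1 ^ 2 ≤ (k:ℤ) := by nlinarith [sq_nonneg p.2, (by exact_mod_cast hD : (1:ℤ) ≤ D)]
    have h2 : p.2 ^ 2 ≤ (k:ℤ) := by nlinarith [sq_nonneg p.1, (by exact_mod_cast hD : (1:ℤ) ≤ D)]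
    have b1 : |p.1| ≤ (k:ℤ) := by nlinarith [abs_nonneg p.1, sq_abs p.1]
    have b2 : |p.2| ≤ (k:ℤ) := by nlinarith [abs_nonneg p.2, sq_abs p.2]
    rw [Finset.mem_product]
    constructor <;> rw [Finset.mem_Icc] <;> constructor <;> linarith [abs_le.mp b1, abs_le.mp b2,
      (abs_le.mp b1).1, (abs_le.mp b2).1]

/-- Primitive solutions. -/
noncomputable def primF (D m : ℕ) : Finset (ℤ × ℤ) := (solF D m).filter (fun p => Int.gcd p.1 p.2 = 1)

/-- number of square roots of -D mod m -/
noncomputable def rc (D m : ℕ) : ℕ := Nat.card {s : ZMod m // s ^ 2 + (D : ZMod m) = 0}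

lemma rc_eq_card {D m : ℕ} [NeZero m] :
    rc D m = (univ.filter (fun s : ZMod m => s ^ 2 + (D : ZMod m) = 0)).card := by
  rw [rc, Nat.card_eq_fintype_card, Fintype.card_subtype]

lemma rc_one (D : ℕ) : rc D 1 = 1 := by
  rw [rc_eq_card]
  have : (univ.filter (fun s : ZMod 1 => s ^ 2 + (D : ZMod 1) = 0)) = univ := by
    apply Finset.filter_true_of_mem; intro s _; exact Subsingleton.elim _ _
  rw [this]; rfl

noncomputable def G (D k : ℕ) : ℕ := ∑ g ∈ k.divisors.filter (fun g => g ^ 2 ∣ k), rc D (k / g ^ 2)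

lemma step_A {D k : ℕ} (hD : 0 < D) (hk : 0 < k) :
    (solF D k).card ≤ ∑ g ∈ k.divisors.filter (fun g => g ^ 2 ∣ k), (primF D (k / g ^ 2)).card := by
  rw [← Finset.card_sigma]
  apply Finset.card_le_card_of_injOn
    (fun p => ⟨Int.gcd p.1 p.2, (p.1 / Int.gcd p.1 p.2, p.2 / Int.gcd p.1 p.2)⟩)
  · intro p hp
    obtain ⟨x, y⟩ := p
    have hsol : x ^ 2 + (D:ℤ) * y ^ 2 = (k:ℤ) := (mem_solF hD).mp hp
    set g : ℕ := Int.gcd x y with hg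
    have hgx : (g:ℤ) ∣ x := Int.gcd_dvd_left _ _
    have hgy : (g:ℤ) ∣ y := Int.gcd_dvd_right _ _
    have hgne : g ≠ 0 := by
      intro h0
      have hx0 : x = 0 := (Int.gcd_eq_zero_iff.mp h0).1
      have hy0 : y = 0 := (Int.gcd_eq_zero_iff.mp h0).2
      rw [hx0, hy0] at hsol
      simp at hsol
      omega
    have hgpos : 0 < g := Nat.pos_of_ne_zero hgne
    have hdvd2 : ((g:ℤ))^2 ∣ (k:ℤ) := by
      rw [← hsol]
      exact dvd_add (pow_dvd_pow_of_dvd hgx 2) (Dvd.dvd.mul_left (pow_dvd_pow_of_dvd hgy 2) _)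
    have hdvdk : g ^ 2 ∣ k := by
      have := hdvd2
      rw [show ((g:ℤ))^2 = ((g^2 : ℕ) : ℤ) by push_cast; ring] at this
      exact_mod_cast this
    obtain ⟨x0, hx0⟩ := hgx
    obtain ⟨y0, hy0⟩ := hgy
    have hx0' : x / (g:ℤ) = x0 := by rw [hx0]; exact Int.mul_ediv_cancel_left _ (by exact_mod_cast hgne)
    have hy0' : y / (g:ℤ) = y0 := by rw [hy0]; exact Int.mul_ediv_cancel_left _ (by exact_mod_cast hgne)
    have hcast : ((g:ℤ))^2 * ((k / g^2 : ℕ) : ℤ) = (k:ℤ) := by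
      rw [show ((g:ℤ))^2 = ((g^2 : ℕ) : ℤ) by push_cast; ring, ← Nat.cast_mul,
        Nat.mul_div_cancel' hdvdk]
    have heq : x0 ^ 2 + (D:ℤ) * y0 ^ 2 = ((k / g^2 : ℕ) : ℤ) := by
      have h2 : ((g:ℤ))^2 * (x0 ^ 2 + (D:ℤ) * y0 ^ 2) = ((g:ℤ))^2 * ((k / g^2 : ℕ) : ℤ) := by
        rw [hcast, ← hsol, hx0, hy0]; ring
      exact mul_left_cancel₀ (by positivity) h2
    refine Finset.mem_sigma.mpr ⟨Finset.mem_filter.mpr ⟨Nat.mem_divisors.mpr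
      ⟨dvd_trans (dvd_pow_self g (by norm_num)) hdvdk, hk.ne'⟩, hdvdk⟩, ?_⟩
    refine Finset.mem_filter.mpr ⟨(mem_solF hD).mpr ?_, ?_⟩
    · show (x / (g:ℤ)) ^ 2 + (D:ℤ) * (y / (g:ℤ)) ^ 2 = ((k / g^2 : ℕ) : ℤ)
      rw [hx0', hy0']; exact heq
    · show Int.gcd (x / (g:ℤ)) (y / (g:ℤ)) = 1
      exact Int.gcd_div_gcd_div_gcd (by exact_mod_cast hgpos)
  · intro p hp q hq h
    simp only [Sigma.mk.inj_iff] at h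
    obtain ⟨h1, h2⟩ := h
    have h2' := eq_of_heq h2
    have hpx : (Int.gcd p.1 p.2 : ℤ) * (p.1 / (Int.gcd p.1 p.2 : ℤ)) = p.1 :=
      Int.mul_ediv_cancel' (Int.gcd_dvd_left _ _)
    have hpy : (Int.gcd p.1 p.2 : ℤ) * (p.2 / (Int.gcd p.1 p.2 : ℤ)) = p.2 :=
      Int.mul_ediv_cancel' (Int.gcd_dvd_right _ _)
    have hqx : (Int.gcd q.1 q.2 : ℤ) * (q.1 / (Int.gcd q.1 q.2 : ℤ)) = q.1 :=
      Int.mul_ediv_cancel' (Int.gcd_dvd_left _ _)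
    have hqy : (Int.gcd q.1 q.2 : ℤ) * (q.2 / (Int.gcd q.1 q.2 : ℤ)) = q.2 :=
      Int.mul_ediv_cancel' (Int.gcd_dvd_right _ _)
    have e1 : (p.1 / (Int.gcd p.1 p.2 : ℤ)) = (q.1 / (Int.gcd q.1 q.2 : ℤ)) := by
      have := congrArg Prod.fst h2'; simpa using this
    have e2 : (p.2 / (Int.gcd p.1 p.2 : ℤ)) = (q.2 / (Int.gcd q.1 q.2 : ℤ)) := by
      have := congrArg Prod.snd h2'; simpa using this
    have : p.1 = q.1 := by rw [← hpx, ← hqx, e1, h1]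
    have : p.2 = q.2 := by rw [← hpy, ← hqy, e2, h1]
    exact Prod.ext ‹p.1 = q.1› ‹p.2 = q.2›

lemma unit_eq {D m x y x' y' : ℤ} (hD : 1 ≤ D) (hm : 0 < m)
    (h1 : x ^ 2 + D * y ^ 2 = m) (h2 : x' ^ 2 + D * y' ^ 2 = m)
    (hc1 : m ∣ x * y' - x' * y) (hc2 : m ∣ x * x' + D * y * y') :
    (x' = x ∧ y' = y) ∨ (x' = -x ∧ y' = -y) ∨
      (D = 1 ∧ ((x' = -y ∧ y' = x) ∨ (x' = y ∧ y' = -x))) := by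
  obtain ⟨b, hb⟩ := hc1
  obtain ⟨a, ha⟩ := hc2
  have key : m ^ 2 * (a ^ 2 + D * b ^ 2) = m ^ 2 * 1 := by
    linear_combination (x' ^ 2 + D * y' ^ 2) * h1 + m * h2
      - (x * x' + D * y * y' + m * a) * ha - D * (x * y' - x' * y + m * b) * hb
  have hunit : a ^ 2 + D * b ^ 2 = 1 := mul_left_cancel₀ (pow_ne_zero 2 hm.ne') key
  have hx' : m * x' = m * (a * x - D * b * y) := by linear_combination x * ha - x' * h1 - D * y * hb
  have hy' : m * y' = m * (a * y + b * x) := by linear_combination y * ha + x * hb - y' * h1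
  have hx'' : x' = a * x - D * b * y := mul_left_cancel₀ hm.ne' hx'
  have hy'' : y' = a * y + b * x := mul_left_cancel₀ hm.ne' hy'
  have hbb : -1 ≤ b ∧ b ≤ 1 := by
    constructor <;> nlinarith [sq_nonneg a, sq_nonneg (b - 1), sq_nonneg (b + 1)]
  have hb3 : b = -1 ∨ b = 0 ∨ b = 1 := by omega
  rcases hb3 with hb0 | hb0 | hb0
  · subst hb0
    have hD1 : D = 1 := by nlinarith [sq_nonneg a]
    have ha0 : a = 0 := by nlinarith
    subst hD1; subst ha0
    right; right
    exact ⟨rfl, Or.inr ⟨by linarith [hx''], by linarith [hy'']⟩⟩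
  · subst hb0
    have ha1 : a = 1 ∨ a = -1 := by
      have hsq : a ^ 2 = 1 := by linarith
      rcases mul_eq_zero.mp (show (a - 1) * (a + 1) = 0 by linear_combination hsq) with h | h
      · left; linarith
      · right; linarith
    rcases ha1 with h | h <;> subst h
    · left; constructor <;> [linarith [hx'']; linarith [hy'']]
    · right; left; constructor <;> [linarith [hx'']; linarith [hy'']]
  · subst hb0
    have hD1 : D = 1 := by nlinarith [sq_nonneg a]
    have ha0 : a = 0 := by nlinarith
    subst hD1; subst ha0
    right; right
    exact ⟨rfl, Or.inl ⟨by linarith [hx''], by linarith [hy'']⟩⟩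

lemma unit_of_copr {m : ℕ} {y : ℤ} (h : IsCoprime (m : ℤ) y) : IsUnit ((y : ℤ) : ZMod m) := by
  obtain ⟨c, d, hcd⟩ := h
  apply IsUnit.of_mul_eq_one ((d : ℤ) : ZMod m)
  have := congrArg (fun t : ℤ => ((t : ZMod m))) hcd
  push_cast at this
  simpa [ZMod.natCast_self, mul_comm] using this

lemma prim_sol {D m : ℕ} {p : ℤ × ℤ} (hD : 0 < D) (hp : p ∈ primF D m) :
    p.1 ^ 2 + (D : ℤ) * p.2 ^ 2 = (m : ℤ) :=
  (mem_solF hD).mp (Finset.mem_filter.mp hp).1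

lemma prim_copr {D m : ℕ} {p : ℤ × ℤ} (hD : 0 < D) (hp : p ∈ primF D m) :
    IsCoprime (m : ℤ) p.2 := by
  have hg : Int.gcd p.1 p.2 = 1 := (Finset.mem_filter.mp hp).2
  have hxy : IsCoprime p.1 p.2 := Int.isCoprime_iff_gcd_eq_one.mpr hg
  have h1 : IsCoprime p.2 (p.1 ^ 2) := (hxy.symm).pow_right
  have h2 : IsCoprime p.2 (p.1 ^ 2 + p.2 * ((D : ℤ) * p.2)) := h1.add_mul_left_right _
  have heq : p.1 ^ 2 + p.2 * ((D : ℤ) * p.2) = (m : ℤ) := by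
    rw [← prim_sol hD hp]; ring
  rw [heq] at h2
  exact h2.symm

lemma step_B {D m : ℕ} (hD : 0 < D) (hm : 0 < m) :
    (primF D m).card ≤ (if D = 1 then 4 else 2) * rc D m := by
  haveI : NeZero m := ⟨hm.ne'⟩
  rw [rc_eq_card]
  apply Finset.card_le_mul_card_image_of_maps_to
    (f := fun p : ℤ × ℤ => ((p.1 : ℤ) : ZMod m) * ((p.2 : ℤ) : ZMod m)⁻¹)
  · intro p hp
    have hsol := prim_sol hD hp
    have hinv : ((p.2 : ℤ) : ZMod m) * ((p.2 : ℤ) : ZMod m)⁻¹ = 1 :=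
      ZMod.mul_inv_of_unit _ (unit_of_copr (prim_copr hD hp))
    have hzero : ((p.1 : ℤ) : ZMod m) ^ 2 + (D : ZMod m) * ((p.2 : ℤ) : ZMod m) ^ 2 = 0 := by
      have := congrArg (fun t : ℤ => ((t : ZMod m))) hsol
      push_cast at this
      simpa [ZMod.natCast_self] using this
    simp only [Finset.mem_filter, Finset.mem_univ, true_and]
    have : (((p.1 : ℤ) : ZMod m) * ((p.2 : ℤ) : ZMod m)⁻¹) ^ 2 + (D : ZMod m)
        = (((p.1 : ℤ) : ZMod m) ^ 2 + (D : ZMod m) * ((p.2 : ℤ) : ZMod m) ^ 2)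
          * (((p.2 : ℤ) : ZMod m)⁻¹) ^ 2 := by
      have h2 : (D : ZMod m) = (D : ZMod m) * (((p.2 : ℤ) : ZMod m) * ((p.2 : ℤ) : ZMod m)⁻¹) ^ 2 := by
        rw [hinv]; ring
      calc (((p.1 : ℤ) : ZMod m) * ((p.2 : ℤ) : ZMod m)⁻¹) ^ 2 + (D : ZMod m)
          = (((p.1 : ℤ) : ZMod m) * ((p.2 : ℤ) : ZMod m)⁻¹) ^ 2
            + (D : ZMod m) * (((p.2 : ℤ) : ZMod m) * ((p.2 : ℤ) : ZMod m)⁻¹) ^ 2 := by rw [← h2]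
        _ = _ := by ring
    rw [this, hzero, zero_mul]
  · intro s hs
    set F := (primF D m).filter
      (fun p : ℤ × ℤ => ((p.1 : ℤ) : ZMod m) * ((p.2 : ℤ) : ZMod m)⁻¹ = s) with hF
    rcases F.eq_empty_or_nonempty with hFe | ⟨p, hp⟩
    · rw [hFe]; simp
    have hpF := Finset.mem_filter.mp hp
    have key : ∀ q ∈ F, (q.1 = p.1 ∧ q.2 = p.2) ∨ (q.1 = -p.1 ∧ q.2 = -p.2) ∨
        ((D : ℤ) = 1 ∧ ((q.1 = -p.2 ∧ q.2 = p.1) ∨ (q.1 = p.2 ∧ q.2 = -p.1))) := by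
      intro q hq
      have hqF := Finset.mem_filter.mp hq
      have hsolp := prim_sol hD hpF.1
      have hsolq := prim_sol hD hqF.1
      have hinvp : ((p.2 : ℤ) : ZMod m) * ((p.2 : ℤ) : ZMod m)⁻¹ = 1 :=
        ZMod.mul_inv_of_unit _ (unit_of_copr (prim_copr hD hpF.1))
      have hinvq : ((q.2 : ℤ) : ZMod m) * ((q.2 : ℤ) : ZMod m)⁻¹ = 1 :=
        ZMod.mul_inv_of_unit _ (unit_of_copr (prim_copr hD hqF.1))
      -- congruence x*y' ≡ x'*y  (p plays (x,y), q plays (x',y'))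
      have hceq : ((p.1 * q.2 - q.1 * p.2 : ℤ) : ZMod m) = 0 := by
        have h0 : ((p.1 : ℤ) : ZMod m) * ((p.2 : ℤ) : ZMod m)⁻¹
            = ((q.1 : ℤ) : ZMod m) * ((q.2 : ℤ) : ZMod m)⁻¹ := by rw [hpF.2, hqF.2]
        have e1 : ((p.1 : ℤ) : ZMod m) * ((q.2 : ℤ) : ZMod m)
            = ((q.1 : ℤ) : ZMod m) * ((p.2 : ℤ) : ZMod m) := by
          calc ((p.1 : ℤ) : ZMod m) * ((q.2 : ℤ) : ZMod m)
              = ((p.1 : ℤ) : ZMod m) * ((q.2 : ℤ) : ZMod m)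
                * (((p.2 : ℤ) : ZMod m) * ((p.2 : ℤ) : ZMod m)⁻¹) := by rw [hinvp, mul_one]
            _ = ((p.1 : ℤ) : ZMod m) * ((p.2 : ℤ) : ZMod m)⁻¹
                * (((p.2 : ℤ) : ZMod m) * ((q.2 : ℤ) : ZMod m)) := by ring
            _ = ((q.1 : ℤ) : ZMod m) * ((q.2 : ℤ) : ZMod m)⁻¹
                * (((p.2 : ℤ) : ZMod m) * ((q.2 : ℤ) : ZMod m)) := by rw [h0]
            _ = ((q.1 : ℤ) : ZMod m) * ((p.2 : ℤ) : ZMod m)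
                * (((q.2 : ℤ) : ZMod m) * ((q.2 : ℤ) : ZMod m)⁻¹) := by ring
            _ = ((q.1 : ℤ) : ZMod m) * ((p.2 : ℤ) : ZMod m) := by rw [hinvq, mul_one]
        push_cast
        rw [e1]
        ring
      have hc1 : (m : ℤ) ∣ p.1 * q.2 - q.1 * p.2 :=
        (ZMod.intCast_zmod_eq_zero_iff_dvd _ _).mp hceq
      have hc2 : (m : ℤ) ∣ p.1 * q.1 + (D : ℤ) * p.2 * q.2 := by
        obtain ⟨c, hc⟩ := hc1
        have hdvd : (m : ℤ) ∣ (p.1 * q.1 + (D : ℤ) * p.2 * q.2) * (p.2 * q.2) :=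
          ⟨p.2 ^ 2 + c * q.1 * p.2, by linear_combination p.2 ^ 2 * hsolq + q.1 * p.2 * hc⟩
        exact ((prim_copr hD hpF.1).mul_right (prim_copr hD hqF.1)).dvd_of_dvd_mul_right hdvd
      have := unit_eq (by exact_mod_cast hD) (by exact_mod_cast hm) hsolp hsolq hc1 hc2
      tauto
    by_cases hD1 : D = 1
    · have hsub : F ⊆ {p, -p, (-p.2, p.1), (p.2, -p.1)} := by
        intro q hq
        rcases key q hq with ⟨h1, h2⟩ | ⟨h1, h2⟩ | ⟨_, ⟨h1, h2⟩ | ⟨h1, h2⟩⟩ <;>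
          simp [Finset.mem_insert, Prod.ext_iff, h1, h2] <;> tauto
      rw [if_pos hD1]
      calc F.card ≤ ({p, -p, (-p.2, p.1), (p.2, -p.1)} : Finset (ℤ × ℤ)).card :=
            Finset.card_le_card hsub
        _ ≤ 4 := by
            apply le_trans (Finset.card_insert_le _ _)
            have := Finset.card_insert_le (-p) ({(-p.2, p.1), (p.2, -p.1)} : Finset (ℤ × ℤ))
            have := Finset.card_insert_le ((-p.2, p.1)) ({(p.2, -p.1)} : Finset (ℤ × ℤ))
            simp_all
            omega
    · have hsub : F ⊆ {p, -p} := by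
        intro q hq
        rcases key q hq with ⟨h1, h2⟩ | ⟨h1, h2⟩ | ⟨hD2, _⟩
        · simp [Finset.mem_insert, Prod.ext_iff, h1, h2]
        · simp [Finset.mem_insert, Prod.ext_iff, h1, h2]
        · exfalso; exact hD1 (by exact_mod_cast hD2)
      rw [if_neg hD1]
      calc F.card ≤ ({p, -p} : Finset (ℤ × ℤ)).card := Finset.card_le_card hsub
        _ ≤ 2 := by
            apply le_trans (Finset.card_insert_le _ _)
            simp

lemma rc_mul {D m n : ℕ} (h : Nat.Coprime m n) : rc D (m * n) = rc D m * rc D n := by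
  rw [rc, rc, rc, ← Nat.card_prod]
  apply Nat.card_congr
  refine (Equiv.subtypeEquiv (ZMod.chineseRemainder h).toEquiv ?_).trans
    (Equiv.subtypeProdEquivProd (p := fun s : ZMod m => s ^ 2 + (D : ZMod m) = 0)
      (q := fun s : ZMod n => s ^ 2 + (D : ZMod n) = 0))
  intro s
  set e := ZMod.chineseRemainder h
  constructor
  · intro hs
    have h2 : e (s ^ 2 + (D : ZMod (m * n))) = e 0 := by rw [hs]
    rw [map_add, map_pow, map_natCast, map_zero, Prod.ext_iff] at h2
    simpa using h2
  · intro hs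
    apply e.injective
    rw [map_add, map_pow, map_natCast, map_zero, Prod.ext_iff]
    simpa using hs

/-- lift a root to an integer divisibility -/
lemma root_lift {D n : ℕ} [NeZero n] {s : ZMod n} (hs : s ^ 2 + (D : ZMod n) = 0) :
    (n : ℤ) ∣ (s.val : ℤ) ^ 2 + (D : ℤ) := by
  rw [← ZMod.intCast_zmod_eq_zero_iff_dvd]
  push_cast
  rw [ZMod.natCast_rightInverse s]
  exact_mod_cast hs

lemma eq_of_dvd_sub {n : ℕ} [NeZero n] {s t : ZMod n}
    (h : (n : ℤ) ∣ (s.val : ℤ) - (t.val : ℤ)) : s = t := by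
  have h0 : ((s.val : ℤ) - (t.val : ℤ) : ℤ) = ((s.val : ℤ) - (t.val : ℤ)) := rfl
  have := (ZMod.intCast_zmod_eq_zero_iff_dvd ((s.val : ℤ) - (t.val : ℤ)) n).mpr h
  push_cast at this
  rw [ZMod.natCast_rightInverse s, ZMod.natCast_rightInverse t] at this
  linear_combination this

lemma neg_eq_of_dvd_add {n : ℕ} [NeZero n] {s t : ZMod n}
    (h : (n : ℤ) ∣ (s.val : ℤ) + (t.val : ℤ)) : s = -t := by
  have := (ZMod.intCast_zmod_eq_zero_iff_dvd ((s.val : ℤ) + (t.val : ℤ)) n).mpr h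
  push_cast at this
  rw [ZMod.natCast_rightInverse s, ZMod.natCast_rightInverse t] at this
  linear_combination this

lemma card_le_two_of {α : Type*} [DecidableEq α] {F : Finset α} {f : α → α}
    (h : ∀ s ∈ F, ∀ t ∈ F, s = t ∨ s = f t) : F.card ≤ 2 := by
  rcases F.eq_empty_or_nonempty with hFe | ⟨t, ht⟩
  · simp [hFe]
  have hsub : F ⊆ {t, f t} := by
    intro s hs
    rcases h s hs t ht with h1 | h1 <;> simp [h1]
  refine (Finset.card_le_card hsub).trans ?_
  refine (Finset.card_insert_le _ _).trans ?_
  simp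

/-- For an odd prime p not dividing D, at most 2 roots mod p^j. -/
lemma rc_odd_le_two {D p : ℕ} (hp : p.Prime) (hp2 : p ≠ 2) (hpD : ¬ p ∣ D) {j : ℕ}
    (hj : 1 ≤ j) : rc D (p ^ j) ≤ 2 := by
  haveI : NeZero (p ^ j) := ⟨pow_ne_zero _ hp.ne_zero⟩
  rw [rc_eq_card]
  apply card_le_two_of (f := fun t => -t)
  intro s hs t ht
  simp only [Finset.mem_filter, Finset.mem_univ, true_and] at hs ht
  have has := root_lift hs
  have hat := root_lift ht
  set a : ℤ := (s.val : ℤ)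
  set b : ℤ := (t.val : ℤ)
  have hdvd : ((p : ℤ) ^ j) ∣ (a - b) * (a + b) := by
    have h1 : ((p : ℤ) ^ j) ∣ (a ^ 2 + D) - (b ^ 2 + D) := by
      push_cast at has hat ⊢
      exact dvd_sub has hat
    have h2 : (a ^ 2 + (D : ℤ)) - (b ^ 2 + D) = (a - b) * (a + b) := by ring
    rwa [h2] at h1
  have hprime : Prime (p : ℤ) := Nat.prime_iff_prime_int.mp hp
  have hnot_both : ¬ ((p : ℤ) ∣ (a - b) ∧ (p : ℤ) ∣ (a + b)) := by
    rintro ⟨h1, h2⟩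
    have h3 : (p : ℤ) ∣ 2 * a := by
      have := dvd_add h1 h2; rwa [show a - b + (a + b) = 2 * a by ring] at this
    have h4 : (p : ℤ) ∣ a := by
      rcases hprime.dvd_mul.mp h3 with h | h
      · exfalso
        have h2' : p ∣ 2 := by exact_mod_cast h
        exact hp2 ((Nat.prime_dvd_prime_iff_eq hp Nat.prime_two).mp h2')
      · exact h
    have h5 : (p : ℤ) ∣ (D : ℤ) := by
      have h6 : (p : ℤ) ∣ a ^ 2 := Dvd.dvd.pow h4 (by norm_num)
      have h7 : (p : ℤ) ∣ a ^ 2 + D := dvd_trans (dvd_pow_self _ (by omega : j ≠ 0)) (by rw [← Nat.cast_pow]; exact has)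
      exact (dvd_add_right h6).mp h7
    exact hpD (by exact_mod_cast h5)
  by_cases hcase : (p : ℤ) ∣ (a + b)
  · right
    have hnd : ¬ (p : ℤ) ∣ (a - b) := fun hc => hnot_both ⟨hc, hcase⟩
    have hcop : IsCoprime ((p : ℤ) ^ j) (a - b) :=
      (IsCoprime.pow_left ((hprime.coprime_iff_not_dvd).mpr hnd))
    have := hcop.dvd_of_dvd_mul_left hdvd
    exact neg_eq_of_dvd_add (by rw [Nat.cast_pow]; exact this)
  · left
    have hcop : IsCoprime ((p : ℤ) ^ j) (a + b) :=
      (IsCoprime.pow_left ((hprime.coprime_iff_not_dvd).mpr hcase))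
    have := hcop.dvd_of_dvd_mul_right hdvd
    exact eq_of_dvd_sub (by rw [Nat.cast_pow]; exact this)

lemma rc_le_self {D n : ℕ} [NeZero n] : rc D n ≤ n := by
  rw [rc_eq_card]
  calc (univ.filter (fun s : ZMod n => s ^ 2 + (D : ZMod n) = 0)).card
      ≤ (univ : Finset (ZMod n)).card := Finset.card_filter_le _ _
    _ = n := by rw [Finset.card_univ, ZMod.card]

lemma rc_prime_le_two {D p : ℕ} (hp : p.Prime) : rc D p ≤ 2 := by
  haveI : Fact p.Prime := ⟨hp⟩
  rw [rc_eq_card]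
  apply card_le_two_of (f := fun t => -t)
  intro s hs t ht
  simp only [Finset.mem_filter, Finset.mem_univ, true_and] at hs ht
  have h0 : (s - t) * (s + t) = 0 := by linear_combination hs - ht
  rcases mul_eq_zero.mp h0 with h | h
  · left; linear_combination h
  · right; linear_combination h

lemma isEmpty_rc {D n : ℕ} [NeZero n]
    (h : ∀ s : ZMod n, ¬ (s ^ 2 + (D : ZMod n) = 0)) : rc D n = 0 := by
  haveI : IsEmpty {s : ZMod n // s ^ 2 + (D : ZMod n) = 0} := ⟨fun x => h x.1 x.2⟩
  exact Nat.card_of_isEmpty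

lemma rc_eq_zero_dvd {D p : ℕ} (hsq : Squarefree D) (hp : p.Prime) (hpD : p ∣ D) {j : ℕ}
    (hj : 2 ≤ j) : rc D (p ^ j) = 0 := by
  haveI : NeZero (p ^ j) := ⟨pow_ne_zero _ hp.ne_zero⟩
  apply isEmpty_rc
  intro s hs
  have has := root_lift hs
  set a : ℤ := (s.val : ℤ)
  have has' : (p : ℤ) ^ j ∣ a ^ 2 + D := by exact_mod_cast has
  have h4 : ((p : ℤ) ^ 2) ∣ a ^ 2 + D := dvd_trans (pow_dvd_pow (p : ℤ) hj) has'
  have hprime : Prime (p : ℤ) := Nat.prime_iff_prime_int.mp hp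
  have hpa : (p : ℤ) ∣ a := by
    have h1 : (p : ℤ) ∣ a ^ 2 + D := dvd_trans (dvd_pow_self _ two_ne_zero) h4
    have h2 : (p : ℤ) ∣ (D : ℤ) := by exact_mod_cast hpD
    have h3 : (p : ℤ) ∣ a ^ 2 := (dvd_add_right h2).mp (by rwa [add_comm] at h1)
    exact hprime.dvd_of_dvd_pow h3
  have hp2D : ((p : ℤ)) ^ 2 ∣ (D : ℤ) := by
    have h5 : ((p : ℤ)) ^ 2 ∣ a ^ 2 := pow_dvd_pow_of_dvd hpa 2
    exact (dvd_add_right h5).mp h4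
  have : (p * p : ℕ) ∣ D := by
    have := hp2D
    rw [show ((p:ℤ))^2 = ((p*p : ℕ) : ℤ) by push_cast; ring] at this
    exact_mod_cast this
  exact hp.one_lt.ne' (Nat.isUnit_iff.mp (hsq p this))

lemma rc_two_zero {D : ℕ} (hD4 : D % 4 = 1 ∨ D % 4 = 2) {j : ℕ} (hj : 2 ≤ j) :
    rc D (2 ^ j) = 0 := by
  haveI : NeZero (2 ^ j) := ⟨pow_ne_zero _ two_ne_zero⟩
  apply isEmpty_rc
  intro s hs
  have has := root_lift hs
  set a : ℤ := (s.val : ℤ)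
  have has' : (2 : ℤ) ^ j ∣ a ^ 2 + D := by exact_mod_cast has
  have h4 : (4 : ℤ) ∣ a ^ 2 + D :=
    dvd_trans (by rw [show (4:ℤ) = 2 ^ 2 by norm_num]; exact pow_dvd_pow (2:ℤ) hj) has'
  obtain ⟨e, he⟩ := h4
  rcases Int.even_or_odd a with ⟨c, hc⟩ | ⟨c, hc⟩
  · rw [hc] at he
    have hdd : (4 : ℤ) ∣ (D : ℤ) := ⟨e - c ^ 2, by linear_combination he⟩
    have : (4 : ℕ) ∣ D := by exact_mod_cast hdd
    omega
  · rw [hc] at he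
    have hdd : (4 : ℤ) ∣ (D : ℤ) + 1 := ⟨e - c ^ 2 - c, by linear_combination he⟩
    have : (4 : ℕ) ∣ D + 1 := by exact_mod_cast hdd
    omega

lemma card_le_four_of {α : Type*} [DecidableEq α] {F : Finset α} {f g h : α → α}
    (hh : ∀ s ∈ F, ∀ t ∈ F, s = t ∨ s = f t ∨ s = g t ∨ s = h t) : F.card ≤ 4 := by
  rcases F.eq_empty_or_nonempty with hFe | ⟨t, ht⟩
  · simp [hFe]
  have hsub : F ⊆ {t, f t, g t, h t} := by
    intro s hs
    rcases hh s hs t ht with h1 | h1 | h1 | h1 <;> simp [h1]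
  refine (Finset.card_le_card hsub).trans ?_
  refine (Finset.card_insert_le _ _).trans ?_
  have h2 := Finset.card_insert_le (f t) ({g t, h t} : Finset α)
  have h3 := Finset.card_insert_le (g t) ({h t} : Finset α)
  simp only [Finset.card_singleton] at *
  omega

lemma eq_add_cast_of_dvd {n : ℕ} [NeZero n] {s t : ZMod n} {c : ℕ}
    (h : (n : ℤ) ∣ (s.val : ℤ) - (t.val : ℤ) - (c : ℤ)) : s = t + (c : ZMod n) := by
  have h0 := (ZMod.intCast_zmod_eq_zero_iff_dvd _ n).mpr h
  push_cast at h0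
  rw [ZMod.natCast_rightInverse s, ZMod.natCast_rightInverse t] at h0
  linear_combination h0

lemma neg_add_cast_of_dvd {n : ℕ} [NeZero n] {s t : ZMod n} {c : ℕ}
    (h : (n : ℤ) ∣ (s.val : ℤ) + (t.val : ℤ) - (c : ℤ)) : s = -t + (c : ZMod n) := by
  have h0 := (ZMod.intCast_zmod_eq_zero_iff_dvd _ n).mpr h
  push_cast at h0
  rw [ZMod.natCast_rightInverse s, ZMod.natCast_rightInverse t] at h0
  linear_combination h0

lemma rc_two_le_four {D : ℕ} (hD2 : D % 2 = 1) (j : ℕ) : rc D (2 ^ j) ≤ 4 := by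
  haveI : NeZero (2 ^ j) := ⟨pow_ne_zero _ two_ne_zero⟩
  rcases le_or_gt j 2 with hj | hj
  · calc rc D (2 ^ j) ≤ 2 ^ j := rc_le_self
      _ ≤ 4 := by interval_cases j <;> norm_num
  obtain ⟨j', rfl⟩ : ∃ j', j = j' + 2 := ⟨j - 2, by omega⟩
  rw [rc_eq_card]
  set n := 2 ^ (j' + 2) with hn
  have hncast : ((n : ℕ) : ℤ) = 2 ^ (j' + 2) := by rw [hn]; push_cast; ring
  have hccast : (((2 ^ (j' + 1) : ℕ)) : ℤ) = 2 ^ (j' + 1) := by push_cast; ring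
  apply card_le_four_of (f := fun t => -t) (g := fun t => t + ((2 ^ (j' + 1) : ℕ) : ZMod n))
    (h := fun t => -t + ((2 ^ (j' + 1) : ℕ) : ZMod n))
  intro s hs t ht
  simp only [Finset.mem_filter, Finset.mem_univ, true_and] at hs ht
  have has := root_lift hs
  have hat := root_lift ht
  set a : ℤ := (s.val : ℤ) with hadef
  set b : ℤ := (t.val : ℤ) with hbdef
  rw [hncast] at has hat
  have hodd : ∀ x : ℤ, (2:ℤ) ^ (j' + 2) ∣ x ^ 2 + D → x % 2 = 1 := by
    intro x hx
    have h2 : (2:ℤ) ∣ x ^ 2 + D := dvd_trans (dvd_pow_self 2 (by omega)) hx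
    obtain ⟨e, he⟩ := h2
    rcases Int.even_or_odd x with ⟨c, hc⟩ | ⟨c, hc⟩
    · exfalso
      rw [hc] at he
      have hdd : (2 : ℤ) ∣ (D : ℤ) := ⟨e - 2 * c ^ 2, by linear_combination he⟩
      have : (2 : ℕ) ∣ D := by exact_mod_cast hdd
      omega
    · omega
  have ha1 : a % 2 = 1 := hodd a has
  have hb1 : b % 2 = 1 := hodd b hat
  have hdvd : (2:ℤ) ^ (j' + 2) ∣ (a - b) * (a + b) := by
    have h1 := dvd_sub has hat
    rwa [show a ^ 2 + (D:ℤ) - (b ^ 2 + D) = (a - b) * (a + b) by ring] at h1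
  obtain ⟨u, hu⟩ : (2:ℤ) ∣ (a - b) := by omega
  obtain ⟨v, hv⟩ : (2:ℤ) ∣ (a + b) := by omega
  have huv : (2:ℤ) ^ j' ∣ u * v := by
    have h1 : (4:ℤ) * (2 ^ j') ∣ 4 * (u * v) := by
      rw [show (4:ℤ) * (u * v) = (2 * u) * (2 * v) by ring, ← hu, ← hv,
        show (4:ℤ) * 2 ^ j' = 2 ^ (j' + 2) by ring]
      exact hdvd
    exact (mul_dvd_mul_iff_left (by norm_num : (4:ℤ) ≠ 0)).mp h1
  have hprime2 : Prime (2 : ℤ) := Int.prime_two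
  have hsum : u + v = a := by omega
  rcases Int.even_or_odd u with ⟨u', hu'⟩ | ⟨u', hu'⟩
  · -- u even hence v odd, 2^j' ∣ u, so 2^(j'+1) ∣ a - b
    have hcop : IsCoprime ((2:ℤ) ^ j') v :=
      IsCoprime.pow_left ((hprime2.coprime_iff_not_dvd).mpr (by omega))
    have h2u : (2:ℤ) ^ j' ∣ u := hcop.dvd_of_dvd_mul_right huv
    obtain ⟨z, hz⟩ := h2u
    have hab : a - b = 2 ^ (j' + 1) * z := by rw [hu, hz]; ring
    rcases Int.even_or_odd z with ⟨w', hw'⟩ | ⟨w', hw'⟩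
    · refine Or.inl (eq_of_dvd_sub ?_)
      show ((n : ℕ) : ℤ) ∣ a - b
      rw [hncast]
      exact ⟨w', by rw [hab, hw']; ring⟩
    · refine Or.inr (Or.inr (Or.inl (eq_add_cast_of_dvd ?_)))
      show ((n : ℕ) : ℤ) ∣ a - b - ((2 ^ (j' + 1) : ℕ) : ℤ)
      rw [hncast, hccast]
      exact ⟨w', by rw [hab, hw']; ring⟩
  · -- u odd hence 2^j' ∣ v, so 2^(j'+1) ∣ a + b
    have hcop : IsCoprime ((2:ℤ) ^ j') u :=
      IsCoprime.pow_left ((hprime2.coprime_iff_not_dvd).mpr (by omega))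
    have h2v : (2:ℤ) ^ j' ∣ v := hcop.dvd_of_dvd_mul_left huv
    obtain ⟨z, hz⟩ := h2v
    have hab : a + b = 2 ^ (j' + 1) * z := by rw [hv, hz]; ring
    rcases Int.even_or_odd z with ⟨w', hw'⟩ | ⟨w', hw'⟩
    · refine Or.inr (Or.inl (neg_eq_of_dvd_add ?_))
      show ((n : ℕ) : ℤ) ∣ a + b
      rw [hncast]
      exact ⟨w', by rw [hab, hw']; ring⟩
    · refine Or.inr (Or.inr (Or.inr (neg_add_cast_of_dvd ?_)))
      show ((n : ℕ) : ℤ) ∣ a + b - ((2 ^ (j' + 1) : ℕ) : ℤ)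
      rw [hncast, hccast]
      exact ⟨w', by rw [hab, hw']; ring⟩

lemma G_prime_pow {D p : ℕ} (hp : p.Prime) (a : ℕ) :
    G D (p ^ a) = ∑ i ∈ Finset.range (a / 2 + 1), rc D (p ^ (a - 2 * i)) := by
  rw [G]
  refine Finset.sum_nbij' (fun g => Nat.log p g) (fun i => p ^ i) ?_ ?_ ?_ ?_ ?_
  · intro g hg
    obtain ⟨hg1, hg2⟩ := Finset.mem_filter.mp hg
    obtain ⟨i, hi, rfl⟩ := (Nat.dvd_prime_pow hp).mp (Nat.mem_divisors.mp hg1).1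
    simp only [Nat.log_pow hp.one_lt]
    rw [Finset.mem_range]
    have h2 : p ^ (2 * i) ∣ p ^ a := by
      rw [show p ^ (2 * i) = (p ^ i) ^ 2 by rw [← pow_mul, mul_comm]]
      exact hg2
    have := (Nat.pow_dvd_pow_iff_le_right hp.one_lt).mp h2
    omega
  · intro i hi
    rw [Finset.mem_range] at hi
    have h2i : 2 * i ≤ a := by omega
    refine Finset.mem_filter.mpr ⟨Nat.mem_divisors.mpr ⟨?_, pow_ne_zero _ hp.ne_zero⟩, ?_⟩
    · exact pow_dvd_pow p (by omega)
    · rw [show (p ^ i) ^ 2 = p ^ (2 * i) by rw [← pow_mul, mul_comm]]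
      exact pow_dvd_pow p h2i
  · intro g hg
    obtain ⟨hg1, _⟩ := Finset.mem_filter.mp hg
    obtain ⟨i, hi, rfl⟩ := (Nat.dvd_prime_pow hp).mp (Nat.mem_divisors.mp hg1).1
    simp only [Nat.log_pow hp.one_lt]
  · intro i hi
    simp only [Nat.log_pow hp.one_lt]
  · intro g hg
    obtain ⟨hg1, hg2⟩ := Finset.mem_filter.mp hg
    obtain ⟨i, hi, rfl⟩ := (Nat.dvd_prime_pow hp).mp (Nat.mem_divisors.mp hg1).1
    simp only [Nat.log_pow hp.one_lt]
    congr 1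
    have h2 : p ^ (2 * i) ∣ p ^ a := by
      rw [show p ^ (2 * i) = (p ^ i) ^ 2 by rw [← pow_mul, mul_comm]]
      exact hg2
    have h2i := (Nat.pow_dvd_pow_iff_le_right hp.one_lt).mp h2
    rw [show (p ^ i) ^ 2 = p ^ (2 * i) by rw [← pow_mul, mul_comm]]
    rw [Nat.pow_div h2i hp.pos]

lemma sum_le_two_aux {D p a : ℕ} (hp : p.Prime)
    (hzero : ∀ e, 2 ≤ e → rc D (p ^ e) = 0) (ha : 1 ≤ a) :
    ∑ i ∈ Finset.range (a / 2 + 1), rc D (p ^ (a - 2 * i)) ≤ 2 := by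
  calc ∑ i ∈ Finset.range (a / 2 + 1), rc D (p ^ (a - 2 * i))
      ≤ ∑ i ∈ Finset.range (a / 2 + 1), (if i = a / 2 then 2 else 0) := by
        apply Finset.sum_le_sum
        intro i hi
        rw [Finset.mem_range] at hi
        by_cases hcase : i = a / 2
        · subst hcase
          rw [if_pos rfl]
          rcases he : a - 2 * (a / 2) with _ | e'
          · rw [pow_zero, rc_one]; norm_num
          · have : e' = 0 := by omega
            subst this
            rw [pow_one]
            exact rc_prime_le_two hp
        · rw [if_neg hcase, hzero _ (by omega)]
    _ = 2 := by
        rw [Finset.sum_ite_eq' (Finset.range (a / 2 + 1)) (a / 2) (fun _ => 2)]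
        rw [if_pos (Finset.mem_range.mpr (by omega))]

lemma G_odd_prime_pow_le {D p : ℕ} (hsq : Squarefree D) (hp : p.Prime) (hp2 : p ≠ 2)
    (a : ℕ) : G D (p ^ a) ≤ a + 1 := by
  rw [G_prime_pow hp]
  rcases Nat.eq_zero_or_pos a with rfl | ha
  · simp [rc_one]
  by_cases hpD : p ∣ D
  · have hzero : ∀ e, 2 ≤ e → rc D (p ^ e) = 0 := fun e he => rc_eq_zero_dvd hsq hp hpD he
    calc _ ≤ 2 := sum_le_two_aux hp hzero ha
      _ ≤ a + 1 := by omega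
  · rcases Nat.even_or_odd a with ⟨c, hc⟩ | ⟨c, hc⟩
    · subst hc
      have hc2 : (c + c) / 2 = c := by omega
      rw [hc2, Finset.sum_range_succ]
      have hlast : c + c - 2 * c = 0 := by omega
      rw [hlast, pow_zero, rc_one]
      have hrest : ∑ i ∈ Finset.range c, rc D (p ^ (c + c - 2 * i)) ≤ c * 2 := by
        have h := Finset.sum_le_card_nsmul (Finset.range c)
          (fun i => rc D (p ^ (c + c - 2 * i))) 2 (fun i hi => by
            rw [Finset.mem_range] at hi
            exact rc_odd_le_two hp hp2 hpD (by omega))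
        simp only [Finset.card_range, smul_eq_mul] at h
        exact h
      omega
    · subst hc
      have hc2 : (2 * c + 1) / 2 = c := by omega
      rw [hc2]
      have hrest : ∑ i ∈ Finset.range (c + 1), rc D (p ^ (2 * c + 1 - 2 * i)) ≤ (c + 1) * 2 := by
        have h := Finset.sum_le_card_nsmul (Finset.range (c + 1))
          (fun i => rc D (p ^ (2 * c + 1 - 2 * i))) 2 (fun i hi => by
            rw [Finset.mem_range] at hi
            exact rc_odd_le_two hp hp2 hpD (by omega))
        simp only [Finset.card_range, smul_eq_mul] at h
        exact h
      calc _ ≤ (c + 1) * 2 := by simpa using hrest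
        _ ≤ 2 * c + 1 + 1 := by omega

lemma G_two_pow_le {D : ℕ} (hsq : Squarefree D) (hDpos : 0 < D) (a : ℕ) :
    G D (2 ^ a) ≤ (if D % 4 = 3 then 3 else 1) * (a + 1) := by
  rw [G_prime_pow Nat.prime_two]
  rcases Nat.eq_zero_or_pos a with rfl | ha
  · simp [rc_one]; split <;> omega
  by_cases hD4 : D % 4 = 3
  · rw [if_pos hD4]
    have hbound : ∑ i ∈ Finset.range (a / 2 + 1), rc D (2 ^ (a - 2 * i)) ≤ (a / 2 + 1) * 4 := by
      have hD2' : D % 2 = 1 := by omega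
      have h := Finset.sum_le_card_nsmul (Finset.range (a / 2 + 1))
        (fun i => rc D (2 ^ (a - 2 * i))) 4 (fun i _ => rc_two_le_four hD2' _)
      simp only [Finset.card_range, smul_eq_mul] at h
      exact h
    calc _ ≤ (a / 2 + 1) * 4 := by simpa using hbound
      _ ≤ 3 * (a + 1) := by omega
  · rw [if_neg hD4]
    have h4D : ¬ (4 ∣ D) := by
      intro hdvd
      have : (2 * 2 : ℕ) ∣ D := by omega
      exact (Nat.prime_two).one_lt.ne' (Nat.isUnit_iff.mp (hsq 2 this))
    have hD14 : D % 4 = 1 ∨ D % 4 = 2 := by omega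
    have hzero : ∀ e, 2 ≤ e → rc D (2 ^ e) = 0 := fun e he => rc_two_zero hD14 he
    calc _ ≤ 2 := sum_le_two_aux Nat.prime_two hzero ha
      _ ≤ 1 * (a + 1) := by omega

lemma G_mul {D m n : ℕ} (hm : 0 < m) (hn : 0 < n) (h : Nat.Coprime m n) :
    G D (m * n) = G D m * G D n := by
  rw [G, G, G, Finset.sum_mul_sum]
  rw [← Finset.sum_product']
  refine Finset.sum_nbij' (fun g => (Nat.gcd g m, Nat.gcd g n)) (fun q => q.1 * q.2) ?_ ?_ ?_ ?_ ?_
  · intro g hg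
    obtain ⟨hg1, hg2⟩ := Finset.mem_filter.mp hg
    obtain ⟨hgd, _⟩ := Nat.mem_divisors.mp hg1
    have hmul : Nat.gcd g m * Nat.gcd g n = g :=
      (Nat.gcd_mul_gcd_eq_iff_dvd_mul_of_coprime h).mpr hgd
    have hsq : (Nat.gcd g m) ^ 2 ∣ m := by
      have h1 : (Nat.gcd g m) ^ 2 ∣ g ^ 2 := pow_dvd_pow_of_dvd (Nat.gcd_dvd_left _ _) 2
      have h2 : (Nat.gcd g m) ^ 2 ∣ m * n := dvd_trans h1 hg2
      have hcop : Nat.Coprime ((Nat.gcd g m) ^ 2) n :=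
        (Nat.Coprime.pow_left _ (Nat.Coprime.coprime_dvd_left (Nat.gcd_dvd_right _ _) h))
      exact (Nat.Coprime.dvd_of_dvd_mul_right hcop h2)
    have hsq' : (Nat.gcd g n) ^ 2 ∣ n := by
      have h1 : (Nat.gcd g n) ^ 2 ∣ g ^ 2 := pow_dvd_pow_of_dvd (Nat.gcd_dvd_left _ _) 2
      have h2 : (Nat.gcd g n) ^ 2 ∣ m * n := dvd_trans h1 hg2
      have hcop : Nat.Coprime ((Nat.gcd g n) ^ 2) m :=
        (Nat.Coprime.pow_left _ (Nat.Coprime.coprime_dvd_left (Nat.gcd_dvd_right _ _) h.symm))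
      exact (Nat.Coprime.dvd_of_dvd_mul_left hcop h2)
    refine Finset.mem_product.mpr ⟨Finset.mem_filter.mpr ⟨Nat.mem_divisors.mpr
      ⟨dvd_trans (dvd_pow_self _ two_ne_zero) hsq, hm.ne'⟩, hsq⟩,
      Finset.mem_filter.mpr ⟨Nat.mem_divisors.mpr
      ⟨dvd_trans (dvd_pow_self _ two_ne_zero) hsq', hn.ne'⟩, hsq'⟩⟩
  · intro q hq
    obtain ⟨hq1, hq2⟩ := Finset.mem_product.mp hq
    obtain ⟨hq1a, hq1b⟩ := Finset.mem_filter.mp hq1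
    obtain ⟨hq2a, hq2b⟩ := Finset.mem_filter.mp hq2
    refine Finset.mem_filter.mpr ⟨Nat.mem_divisors.mpr ⟨?_, by positivity⟩, ?_⟩
    · exact mul_dvd_mul (Nat.mem_divisors.mp hq1a).1 (Nat.mem_divisors.mp hq2a).1
    · rw [mul_pow]
      exact mul_dvd_mul hq1b hq2b
  · intro g hg
    obtain ⟨hg1, _⟩ := Finset.mem_filter.mp hg
    exact (Nat.gcd_mul_gcd_eq_iff_dvd_mul_of_coprime h).mpr (Nat.mem_divisors.mp hg1).1
  · intro q hq
    obtain ⟨hq1, hq2⟩ := Finset.mem_product.mp hq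
    obtain ⟨hq1a, _⟩ := Finset.mem_filter.mp hq1
    obtain ⟨hq2a, _⟩ := Finset.mem_filter.mp hq2
    have hd1 : q.1 ∣ m := (Nat.mem_divisors.mp hq1a).1
    have hd2 : q.2 ∣ n := (Nat.mem_divisors.mp hq2a).1
    have hcop12 : Nat.Coprime q.2 m := Nat.Coprime.coprime_dvd_left hd2 h.symm
    have hcop21 : Nat.Coprime q.1 n := Nat.Coprime.coprime_dvd_left hd1 h
    have e1 : Nat.gcd (q.1 * q.2) m = q.1 := by
      rw [Nat.Coprime.gcd_mul_right_cancel q.1 hcop12]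
      exact Nat.gcd_eq_left hd1
    have e2 : Nat.gcd (q.1 * q.2) n = q.2 := by
      rw [mul_comm, Nat.Coprime.gcd_mul_right_cancel q.2 hcop21]
      exact Nat.gcd_eq_left hd2
    exact Prod.ext e1 e2
  · intro g hg
    obtain ⟨hg1, hg2⟩ := Finset.mem_filter.mp hg
    obtain ⟨hgd, _⟩ := Nat.mem_divisors.mp hg1
    -- value equality
    have hmul : Nat.gcd g m * Nat.gcd g n = g :=
      (Nat.gcd_mul_gcd_eq_iff_dvd_mul_of_coprime h).mpr hgd
    set g1 := Nat.gcd g m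
    set g2 := Nat.gcd g n
    have hsq : g1 ^ 2 ∣ m := by
      have h1 : g1 ^ 2 ∣ g ^ 2 := pow_dvd_pow_of_dvd (Nat.gcd_dvd_left _ _) 2
      have h2 : g1 ^ 2 ∣ m * n := dvd_trans h1 hg2
      have hcop : Nat.Coprime (g1 ^ 2) n :=
        (Nat.Coprime.pow_left _ (Nat.Coprime.coprime_dvd_left (Nat.gcd_dvd_right _ _) h))
      exact (Nat.Coprime.dvd_of_dvd_mul_right hcop h2)
    have hsq' : g2 ^ 2 ∣ n := by
      have h1 : g2 ^ 2 ∣ g ^ 2 := pow_dvd_pow_of_dvd (Nat.gcd_dvd_left _ _) 2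
      have h2 : g2 ^ 2 ∣ m * n := dvd_trans h1 hg2
      have hcop : Nat.Coprime (g2 ^ 2) m :=
        (Nat.Coprime.pow_left _ (Nat.Coprime.coprime_dvd_left (Nat.gcd_dvd_right _ _) h.symm))
      exact (Nat.Coprime.dvd_of_dvd_mul_left hcop h2)
    have hdiv : m * n / g ^ 2 = (m / g1 ^ 2) * (n / g2 ^ 2) := by
      rw [← hmul, mul_pow]
      exact (Nat.div_mul_div_comm hsq hsq').symm
    rw [hdiv]
    have hcopdiv : Nat.Coprime (m / g1 ^ 2) (n / g2 ^ 2) :=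
      Nat.Coprime.coprime_dvd_left (Nat.div_dvd_of_dvd hsq)
        (Nat.Coprime.coprime_dvd_right (Nat.div_dvd_of_dvd hsq') h)
    exact rc_mul hcopdiv

lemma G_one (D : ℕ) : G D 1 = 1 := by
  rw [show (1 : ℕ) = 2 ^ 0 by norm_num, G_prime_pow Nat.prime_two]
  simp [rc_one]

lemma G_odd_le {D : ℕ} (hsq : Squarefree D) (hDpos : 0 < D) :
    ∀ m : ℕ, ¬ 2 ∣ m → G D m ≤ m.divisors.card := by
  intro m
  induction m using Nat.recOnPosPrimePosCoprime with
  | prime_pow p n hp hn =>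
    intro hodd
    have hp2 : p ≠ 2 := by
      rintro rfl
      exact hodd (dvd_pow_self 2 hn.ne')
    have hτ : (p ^ n).divisors.card = n + 1 := by
      rw [Nat.divisors_prime_pow hp, Finset.card_map, Finset.card_range]
    rw [hτ]
    exact G_odd_prime_pow_le hsq hp hp2 n
  | zero => intro h; exact absurd (dvd_zero 2) h
  | one => intro _; rw [G_one]; simp
  | coprime a b ha hb hab iha ihb =>
    intro hodd
    have hodda : ¬ 2 ∣ a := fun hd => hodd (hd.mul_right b)
    have hoddb : ¬ 2 ∣ b := fun hd => hodd (hd.mul_left a)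
    rw [G_mul (by omega) (by omega) hab, Nat.Coprime.card_divisors_mul hab]
    exact Nat.mul_le_mul (iha hodda) (ihb hoddb)

lemma G_bound {D k : ℕ} (hD : Squarefree D) (hDpos : 0 < D) (hk : 0 < k) :
    G D k ≤ (if D = 1 then 1 else 3) * k.divisors.card := by
  -- split k into 2-part and odd part
  set v := k.factorization 2 with hv
  set m := k / 2 ^ v with hm
  have hksplit : 2 ^ v * m = k := Nat.ordProj_mul_ordCompl_eq_self k 2
  have hmpos : 0 < m := Nat.ordCompl_pos 2 hk.ne'
  have hmodd : ¬ 2 ∣ m := Nat.not_dvd_ordCompl Nat.prime_two hk.ne'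
  have hcop : Nat.Coprime (2 ^ v) m :=
    Nat.Coprime.pow_left _ (Nat.coprime_ordCompl Nat.prime_two hk.ne')
  have h1 : G D k = G D (2 ^ v) * G D m := by
    rw [← hksplit]
    exact G_mul (by positivity) hmpos hcop
  have h2 : k.divisors.card = (v + 1) * m.divisors.card := by
    have hτ : (2 ^ v : ℕ).divisors.card = v + 1 := by
      rw [Nat.divisors_prime_pow Nat.prime_two, Finset.card_map, Finset.card_range]
    rw [← hksplit, Nat.Coprime.card_divisors_mul hcop, hτ]
  have h3 : G D (2 ^ v) ≤ (if D % 4 = 3 then 3 else 1) * (v + 1) := G_two_pow_le hD hDpos v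
  have h4 : G D m ≤ m.divisors.card := G_odd_le hD hDpos m hmodd
  have h5 : (if D % 4 = 3 then (3:ℕ) else 1) ≤ (if D = 1 then 1 else 3) := by
    by_cases hD1 : D = 1
    · subst hD1; norm_num
    · rw [if_neg hD1]; split <;> omega
  calc G D k = G D (2 ^ v) * G D m := h1
    _ ≤ ((if D % 4 = 3 then 3 else 1) * (v + 1)) * m.divisors.card :=
        Nat.mul_le_mul h3 h4
    _ ≤ ((if D = 1 then 1 else 3) * (v + 1)) * m.divisors.card := by
        apply Nat.mul_le_mul_right
        exact Nat.mul_le_mul_right _ h5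
    _ = (if D = 1 then 1 else 3) * k.divisors.card := by rw [h2]; ring

end Stmt9Aux

open Stmt9Aux in
/-- For squarefree D > 0 and k > 0, the number of integer solutions to
x² + D y² = k is at most 6 τ(k). -/
theorem stmt_9 (D : ℕ) (hD : Squarefree D) (hDpos : 0 < D) (k : ℕ) (hk : 0 < k) :
    Set.ncard {p : ℤ × ℤ | p.1 ^ 2 + (D : ℤ) * p.2 ^ 2 = (k : ℤ)} ≤
      6 * (Nat.divisors k).card := by
  have hset : {p : ℤ × ℤ | p.1 ^ 2 + (D : ℤ) * p.2 ^ 2 = (k : ℤ)} = ↑(solF D k) := by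
    ext p; simp [mem_solF hDpos, Set.mem_setOf_eq]
  rw [hset, Set.ncard_coe_finset]
  have h1 := step_A hDpos hk
  have h2 : ∑ g ∈ k.divisors.filter (fun g => g ^ 2 ∣ k), (primF D (k / g ^ 2)).card
      ≤ (if D = 1 then 4 else 2) * G D k := by
    rw [G, Finset.mul_sum]
    apply Finset.sum_le_sum
    intro g hg
    have hgmem := Finset.mem_filter.mp hg
    have hgdvd : g ^ 2 ∣ k := hgmem.2
    have hgpos : 0 < g := Nat.pos_of_mem_divisors hgmem.1
    have : 0 < k / g ^ 2 := Nat.div_pos (Nat.le_of_dvd hk hgdvd) (by positivity)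
    exact step_B hDpos this
  have h3 := G_bound hD hDpos hk
  have h4 : (if D = 1 then 4 else 2) * ((if D = 1 then 1 else 3) * k.divisors.card)
      ≤ 6 * k.divisors.card := by
    split <;> nlinarith [Nat.zero_le k.divisors.card]
  calc (solF D k).card ≤ _ := h1
    _ ≤ (if D = 1 then 4 else 2) * G D k := h2
    _ ≤ (if D = 1 then 4 else 2) * ((if D = 1 then 1 else 3) * k.divisors.card) := by
        exact Nat.mul_le_mul_left _ h3
    _ ≤ 6 * k.divisors.card := h4
end

section
/- Let α be an irrational real number of finite type τ, i.e., for every ε > 0 there is c > 0 with ‖qα‖ ≥ c/q^{τ+ε} for all positive integers q, where ‖t‖ is the distance from t to the nearest integer. Then for every ε > 0 there is a constant c' = c'(α,ε) such that Σ_{h=1}^m 1/‖hα‖ ≤ c'·m^{τ+ε} for all positive integers m. -/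
/-- Distance from a real number to the nearest integer. -/
noncomputable def nint (t : ℝ) : ℝ := |t - round t|

lemma nint_nonneg (t : ℝ) : 0 ≤ nint t := abs_nonneg _

lemma nint_le_half (t : ℝ) : nint t ≤ 1 / 2 := abs_sub_round t

lemma nint_le_abs (t : ℝ) (n : ℤ) : nint t ≤ |t - n| := round_le t n

lemma nint_pos {t : ℝ} (h : Irrational t) : 0 < nint t := by
  rw [nint, abs_pos, sub_ne_zero]
  exact h.ne_int _

/-- If α is an irrational of finite type τ, then for every ε > 0 there is c' > 0
with Σ_{h=1}^m 1/‖hα‖ ≤ c' m^{τ+ε} for all m ≥ 1. -/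
theorem stmt_10 (α : ℝ) (hα : Irrational α) (τ : ℝ)
    (htype : ∀ ε : ℝ, 0 < ε → ∃ c : ℝ, 0 < c ∧ ∀ q : ℕ, 0 < q →
      c / (q : ℝ) ^ (τ + ε) ≤ nint (q * α)) :
    ∀ ε : ℝ, 0 < ε → ∃ c' : ℝ, 0 < c' ∧ ∀ m : ℕ, 1 ≤ m →
      ∑ h ∈ Finset.Icc 1 m, 1 / nint (h * α) ≤ c' * (m : ℝ) ^ (τ + ε) := by
  intro ε hε
  have hε2 : 0 < ε / 2 := by positivity
  obtain ⟨c, hc, hq⟩ := htype (ε / 2) hε2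
  set s : ℝ := τ + ε / 2 with hs_def
  -- the exponent s must be nonnegative, otherwise `htype` is contradictory
  have hs : 0 ≤ s := by
    by_contra hneg
    push_neg at hneg
    obtain ⟨q, hqgt⟩ := exists_nat_gt (max 1 ((1 / (2 * c)) ^ (1 / (-s))))
    have hq1 : (1 : ℝ) < (q : ℝ) := lt_of_le_of_lt (le_max_left _ _) hqgt
    have hq0 : 0 < q := by exact_mod_cast lt_trans zero_lt_one hq1
    have hB : (0 : ℝ) ≤ (1 / (2 * c)) ^ (1 / (-s)) :=
      Real.rpow_nonneg (by positivity) _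
    have hlt : (1 / (2 * c)) ^ (1 / (-s)) < (q : ℝ) :=
      lt_of_le_of_lt (le_max_right _ _) hqgt
    have hns : 0 < -s := by linarith
    have h1 : ((1 / (2 * c)) ^ (1 / (-s))) ^ (-s) < (q : ℝ) ^ (-s) :=
      Real.rpow_lt_rpow hB hlt hns
    have h2 : ((1 / (2 * c)) ^ (1 / (-s))) ^ (-s) = 1 / (2 * c) := by
      rw [← Real.rpow_mul (by positivity), one_div_mul_cancel (ne_of_gt hns),
        Real.rpow_one]
    rw [h2] at h1
    have hqs : 0 < (q : ℝ) ^ s := Real.rpow_pos_of_pos (by positivity) s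
    have h4 : (q : ℝ) ^ (-s) = 1 / (q : ℝ) ^ s := by
      rw [Real.rpow_neg (by positivity), one_div]
    rw [h4] at h1
    have h6 : 1 * (q : ℝ) ^ s < 1 * (2 * c) :=
      (div_lt_div_iff₀ (by positivity) hqs).mp h1
    have h5 : c / (q : ℝ) ^ s ≤ 1 / 2 := le_trans (hq q hq0) (nint_le_half _)
    rw [div_le_iff₀ hqs] at h5
    linarith
  -- main case
  refine ⟨4 / c * (1 + 2 / ε), by positivity, ?_⟩
  intro m hm
  have hm0 : (0 : ℝ) < (m : ℝ) := by exact_mod_cast Nat.lt_of_lt_of_le Nat.zero_lt_one hm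
  have hm1 : (1 : ℝ) ≤ (m : ℝ) := by exact_mod_cast hm
  set M : ℝ := (m : ℝ) ^ s with hM_def
  have hMpos : 0 < M := Real.rpow_pos_of_pos hm0 s
  set δ : ℝ := c / M with hδ_def
  have hδ : 0 < δ := by positivity
  set v : ℕ → ℝ := fun h => nint ((h : ℝ) * α) with hv_def
  set w : ℕ → ℝ := fun h => (h : ℝ) * α - round ((h : ℝ) * α) with hw_def
  have hwabs : ∀ h : ℕ, |w h| = v h := by
    intro h; simp only [hv_def, hw_def, nint]
  have hvpos : ∀ h ∈ Finset.Icc 1 m, 0 < v h := by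
    intro h hh
    rw [Finset.mem_Icc] at hh
    exact nint_pos (hα.natCast_mul (by omega))
  -- lower bound on individual values
  have hA : ∀ h ∈ Finset.Icc 1 m, δ ≤ v h := by
    intro h hh
    rw [Finset.mem_Icc] at hh
    refine le_trans ?_ (hq h (by omega))
    have hhpos : (0 : ℝ) < (h : ℝ) := by
      exact_mod_cast Nat.lt_of_lt_of_le Nat.zero_lt_one hh.1
    have h1 : (h : ℝ) ^ s ≤ M := by
      rw [hM_def]
      exact Real.rpow_le_rpow (Nat.cast_nonneg h) (by exact_mod_cast hh.2) hs
    rw [hδ_def]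
    gcongr
    
  -- separation of the fractional parts
  have hsep0 : ∀ a ∈ Finset.Icc 1 m, ∀ b ∈ Finset.Icc 1 m, b < a → δ ≤ |w a - w b| := by
    intro a ha b hb hba
    rw [Finset.mem_Icc] at ha hb
    have hqm : a - b ∈ Finset.Icc 1 m := by
      rw [Finset.mem_Icc]; omega
    have hcast : ((a - b : ℕ) : ℝ) = (a : ℝ) - (b : ℝ) := by
      push_cast [Nat.cast_sub hba.le]; ring
    have h1 : nint (((a - b : ℕ) : ℝ) * α) ≤ |w a - w b| := by
      have h2 := nint_le_abs (((a - b : ℕ) : ℝ) * α)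
        (round ((a : ℝ) * α) - round ((b : ℝ) * α))
      refine h2.trans_eq ?_
      congr 1
      rw [hcast]
      push_cast
      simp only [hw_def]
      ring
    exact (hA _ hqm).trans h1
  have hsep : ∀ a ∈ Finset.Icc 1 m, ∀ b ∈ Finset.Icc 1 m, a ≠ b → δ ≤ |w a - w b| := by
    intro a ha b hb hab
    rcases Nat.lt_or_ge b a with h | h
    · exact hsep0 a ha b hb h
    · rw [abs_sub_comm]
      exact hsep0 b hb a ha (by omega)
  -- distinctness of the values
  have hdist : ∀ a ∈ Finset.Icc 1 m, ∀ b ∈ Finset.Icc 1 m, v a = v b → a = b := by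
    intro a ha b hb hvab
    by_contra hab
    rcases abs_eq_abs.mp ((hwabs a).trans (hvab.trans (hwabs b).symm)) with h | h
    · have := hsep a ha b hb hab
      rw [h, sub_self, abs_zero] at this
      linarith
    · have hab0 : a + b ≠ 0 := by
        rw [Finset.mem_Icc] at ha; omega
      have hirr : Irrational (((a + b : ℕ) : ℝ) * α) := hα.natCast_mul hab0
      apply hirr.ne_int (round ((a : ℝ) * α) + round ((b : ℝ) * α))
      simp only [hw_def] at h
      push_cast
      linarith
  -- rank function
  set r : ℕ → ℕ := fun h => ((Finset.Icc 1 m).filter (fun x => v x ≤ v h)).card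
    with hr_def
  have hr1 : ∀ h ∈ Finset.Icc 1 m, 1 ≤ r h := by
    intro h hh
    have : h ∈ (Finset.Icc 1 m).filter (fun x => v x ≤ v h) :=
      Finset.mem_filter.mpr ⟨hh, le_refl _⟩
    exact Finset.card_pos.mpr ⟨h, this⟩
  have hrm : ∀ h : ℕ, r h ≤ m := by
    intro h
    calc r h ≤ (Finset.Icc 1 m).card := Finset.card_filter_le _ _
    _ = m := by rw [Nat.card_Icc]; omega
  -- counting: at most 2 v h / δ + 1 points below v h
  have hcount : ∀ h ∈ Finset.Icc 1 m, (r h : ℝ) ≤ 2 * v h / δ + 1 := by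
    intro h hh
    have ht0 : 0 ≤ v h := (hvpos h hh).le
    set t := v h with ht_def
    set n : ℤ := ⌊2 * t / δ⌋ with hn_def
    have hn0 : 0 ≤ n := Int.floor_nonneg.mpr (by positivity)
    have hkey : ∀ x y : ℕ, δ ≤ w x - w y → ⌊(w y + t) / δ⌋ < ⌊(w x + t) / δ⌋ := by
      intro x y hxy
      have hstep : (w y + t) / δ + 1 ≤ (w x + t) / δ := by
        have h7 : (w y + t + δ) / δ ≤ (w x + t) / δ :=
          div_le_div_of_nonneg_right (by linarith) hδ.le
        calc (w y + t) / δ + 1 = (w y + t + δ) / δ := by field_simp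
        _ ≤ _ := h7
      have h8 : ⌊(w y + t) / δ⌋ + 1 ≤ ⌊(w x + t) / δ⌋ := by
        rw [← Int.floor_add_one]
        exact Int.floor_le_floor hstep
      omega
    have hcard : ((Finset.Icc 1 m).filter (fun x => v x ≤ t)).card ≤
        (Finset.Icc (0 : ℤ) n).card := by
      apply Finset.card_le_card_of_injOn (fun x => ⌊(w x + t) / δ⌋)
      · intro x hx
        rw [Finset.mem_coe, Finset.mem_filter] at hx
        have hwx : |w x| ≤ t := (hwabs x) ▸ hx.2
        rw [abs_le] at hwx
        rw [Finset.mem_coe, Finset.mem_Icc]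
        refine ⟨Int.floor_nonneg.mpr (div_nonneg (by linarith) hδ.le), ?_⟩
        exact Int.floor_le_floor (by gcongr; linarith)
      · intro x hx y hy hxy
        simp only [Finset.mem_coe, Finset.mem_filter] at hx hy
        by_contra hne
        have hd := hsep x hx.1 y hy.1 hne
        rcases abs_cases (w x - w y) with ⟨he, _⟩ | ⟨he, _⟩
        · exact absurd hxy (ne_of_gt (hkey x y (by linarith)))
        · exact absurd hxy (ne_of_lt (hkey y x (by linarith)))
    have hcard2 : (Finset.Icc (0 : ℤ) n).card = (n + 1).toNat := by
      rw [Int.card_Icc]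
      norm_num
    have hrcard : (r h : ℝ) ≤ ((n + 1).toNat : ℝ) := by
      rw [hr_def]
      exact_mod_cast hcard.trans_eq hcard2
    have hnt : (((n + 1).toNat : ℤ) : ℝ) = (n : ℝ) + 1 := by
      rw [Int.toNat_of_nonneg (by omega)]
      push_cast; ring
    have hfl : ((n : ℝ)) ≤ 2 * t / δ := Int.floor_le _
    push_cast at hnt
    linarith [hrcard.trans_eq hnt]
  -- lower bound on values via rank
  have hvlow : ∀ h ∈ Finset.Icc 1 m, δ * (r h : ℝ) ≤ 4 * v h := by
    intro h hh
    have h1 := hcount h hh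
    have h2 := hA h hh
    have h4 : δ * ((r h : ℝ)) ≤ δ * (2 * v h / δ + 1) :=
      mul_le_mul_of_nonneg_left h1 hδ.le
    have h5 : δ * (2 * v h / δ + 1) = 2 * v h + δ := by
      field_simp
    linarith
  -- rank is injective
  have hlt : ∀ a ∈ Finset.Icc 1 m, ∀ b ∈ Finset.Icc 1 m, v a < v b → r a < r b := by
    intro a ha b hb hvab
    apply Finset.card_lt_card
    rw [Finset.ssubset_iff_of_subset]
    · exact ⟨b, Finset.mem_filter.mpr ⟨hb, le_refl _⟩,
        fun hmem => absurd (Finset.mem_filter.mp hmem).2 (not_le.mpr hvab)⟩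
    · intro x hx
      rw [Finset.mem_filter] at hx ⊢
      exact ⟨hx.1, hx.2.trans hvab.le⟩
  have hrinj : ∀ x ∈ Finset.Icc 1 m, ∀ y ∈ Finset.Icc 1 m, r x = r y → x = y := by
    intro a ha b hb hab
    by_contra hne
    rcases lt_or_gt_of_ne (fun hveq => hne (hdist a ha b hb hveq)) with h | h
    · exact absurd hab (ne_of_lt (hlt a ha b hb h))
    · exact absurd hab.symm (ne_of_lt (hlt b hb a ha h))
  -- the sum estimate
  have step1 : ∑ h ∈ Finset.Icc 1 m, 1 / v h ≤
      ∑ h ∈ Finset.Icc 1 m, 4 / δ * ((r h : ℝ))⁻¹ := by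
    apply Finset.sum_le_sum
    intro h hh
    have hv := hvpos h hh
    have hrpos : (0 : ℝ) < (r h : ℝ) := by exact_mod_cast hr1 h hh
    have hl := hvlow h hh
    calc 1 / v h ≤ 4 / (δ * (r h : ℝ)) := by
          rw [div_le_div_iff₀ hv (by positivity)]
          linarith
    _ = 4 / δ * ((r h : ℝ))⁻¹ := by rw [← div_div, div_eq_mul_inv]
  have step2 : ∑ h ∈ Finset.Icc 1 m, ((r h : ℝ))⁻¹ ≤
      ∑ j ∈ Finset.Icc 1 m, ((j : ℝ))⁻¹ := by
    rw [← Finset.sum_image (g := r) (f := fun j : ℕ => ((j : ℝ))⁻¹) hrinj]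
    apply Finset.sum_le_sum_of_subset_of_nonneg
    · intro j hj
      rw [Finset.mem_image] at hj
      obtain ⟨h, hh, rfl⟩ := hj
      rw [Finset.mem_Icc]
      exact ⟨hr1 h hh, hrm h⟩
    · intro j _ _
      positivity
  have step3 : ∑ j ∈ Finset.Icc 1 m, ((j : ℝ))⁻¹ ≤ 1 + Real.log m := by
    have h1 := harmonic_le_one_add_log m
    rw [harmonic_eq_sum_Icc] at h1
    push_cast at h1
    exact h1
  -- putting it together
  have hone : 1 ≤ (m : ℝ) ^ (ε / 2) := Real.one_le_rpow hm1 hε2.le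
  have hlog : Real.log m ≤ 2 / ε * (m : ℝ) ^ (ε / 2) := by
    calc Real.log m ≤ (m : ℝ) ^ (ε / 2) / (ε / 2) := Real.log_le_rpow_div hm0.le hε2
    _ = 2 / ε * (m : ℝ) ^ (ε / 2) := by
        field_simp
  have h1log : 1 + Real.log m ≤ (1 + 2 / ε) * (m : ℝ) ^ (ε / 2) := by
    have : (1 + 2 / ε) * (m : ℝ) ^ (ε / 2) =
        (m : ℝ) ^ (ε / 2) + 2 / ε * (m : ℝ) ^ (ε / 2) := by ring
    linarith
  have hMm : M * (m : ℝ) ^ (ε / 2) = (m : ℝ) ^ (τ + ε) := by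
    rw [hM_def, ← Real.rpow_add hm0]
    congr 1
    rw [hs_def]; ring
  calc ∑ h ∈ Finset.Icc 1 m, 1 / v h ≤
      ∑ h ∈ Finset.Icc 1 m, 4 / δ * ((r h : ℝ))⁻¹ := step1
  _ = 4 / δ * ∑ h ∈ Finset.Icc 1 m, ((r h : ℝ))⁻¹ := by rw [Finset.mul_sum]
  _ ≤ 4 / δ * (1 + Real.log m) :=
      mul_le_mul_of_nonneg_left (step2.trans step3) (by positivity)
  _ ≤ 4 / δ * ((1 + 2 / ε) * (m : ℝ) ^ (ε / 2)) :=
      mul_le_mul_of_nonneg_left h1log (by positivity)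
  _ = 4 / c * (1 + 2 / ε) * (M * (m : ℝ) ^ (ε / 2)) := by
      rw [hδ_def, div_div_eq_mul_div]
      ring
  _ = 4 / c * (1 + 2 / ε) * (m : ℝ) ^ (τ + ε) := by rw [hMm]
end

section
/- Let α be an irrational of finite type τ and β ∈ ℝ, and let x_n = αn + β. Then for every ε > 0 there exists a constant c = c(α,ε), independent of β, such that the discrepancy D_N of the sequence (x_n) satisfies D_N ≤ c·N^{−1/τ+ε}. -/
open Finset

lemma fract_add_of (x e : ℝ) (h0 : 0 ≤ Int.fract x + e) (h1 : Int.fract x + e < 1) :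
    Int.fract (x + e) = Int.fract x + e := by
  have : x + e = (⌊x⌋ : ℝ) + (Int.fract x + e) := by
    rw [Int.fract]; ring
  rw [this, Int.fract_intCast_add, Int.fract_eq_self.mpr ⟨h0, h1⟩]

lemma fract_decomp (c : ℝ) (p : ℤ) (q : ℕ) (hq : 1 ≤ q) (j : ℕ) :
    Int.fract (c + j * ((p : ℝ)/q)) =
      (Int.fract ((q:ℝ)*c) + (⌊(q:ℝ) * Int.fract (c + j * ((p : ℝ)/q))⌋ : ℝ))/q := by
  have hq0 : (0:ℝ) < q := by exact_mod_cast hq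
  set u := c + j * ((p : ℝ)/q) with hu
  have hqu : (q:ℝ) * u = (q:ℝ)*c + (j : ℝ)*(p:ℝ) := by
    rw [hu]; field_simp
  have key : (q:ℝ) * Int.fract u = (q:ℝ)*c + ((j*p : ℤ) : ℝ) + ((-(q * ⌊u⌋) : ℤ) : ℝ) := by
    rw [Int.fract, mul_sub, hqu]; push_cast; ring
  have h2 : Int.fract ((q:ℝ) * Int.fract u) = Int.fract ((q:ℝ)*c) := by
    rw [key, add_assoc, ← Int.cast_add, Int.fract_add_intCast]
  have h3 : ((⌊(q:ℝ)*Int.fract u⌋ : ℝ)) + Int.fract ((q:ℝ)*c) = (q:ℝ)*Int.fract u := by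
    rw [← h2]; exact Int.floor_add_fract _
  rw [eq_div_iff (ne_of_gt hq0)]
  linarith
open Finset
section Block
variable (α c : ℝ) (p : ℤ) (q N : ℕ)

lemma block_bound (hq : 1 ≤ q) (hqN : q ≤ N) (hcop : Int.gcd p q = 1)
    (δ : ℝ) (hδ : |δ| ≤ 1/(N*q)) (hα : α = (p:ℝ)/q + δ) :
    |∑ j ∈ range q, (Int.fract (c + j * α) - 1/2)| ≤ 4 := by
  have hq0 : (0:ℝ) < q := by exact_mod_cast hq
  have hN0 : (0:ℝ) < N := by exact_mod_cast (hq.trans hqN)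
  have hqN' : (q:ℝ) ≤ N := by exact_mod_cast hqN
  set f := Int.fract ((q:ℝ)*c) with hf
  set u : ℕ → ℝ := fun j => c + j * ((p : ℝ)/q) with hu
  set I : ℕ → ℤ := fun j => ⌊(q:ℝ) * Int.fract (u j)⌋ with hI
  have hdecomp : ∀ j, Int.fract (u j) = (f + (I j : ℝ))/q := fun j => fract_decomp c p q hq j
  have hI0 : ∀ j, 0 ≤ I j := fun j =>
    Int.floor_nonneg.mpr (mul_nonneg hq0.le (Int.fract_nonneg _))
  have hIlt : ∀ j, I j < q := by
    intro j
    have : (q:ℝ) * Int.fract (u j) < q := by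
      nlinarith [Int.fract_lt_one (u j), Int.fract_nonneg (u j)]
    exact_mod_cast Int.floor_lt.mpr (by exact_mod_cast this)
  have hinj : ∀ j ∈ range q, ∀ j' ∈ range q, I j = I j' → j = j' := by
    intro j hj j' hj' hII
    have hfr : Int.fract (u j) = Int.fract (u j') := by
      rw [hdecomp, hdecomp, hII]
    obtain ⟨z, hz⟩ := Int.fract_eq_fract.mp hfr
    have hz2 : ((j:ℝ) - j') * p = z * q := by
      have huu : u j - u j' = ((j:ℝ) - j') * ((p:ℝ)/q) := by rw [hu]; ring
      rw [huu] at hz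
      field_simp at hz
      linarith [hz]
    have hz3 : ((j:ℤ) - j') * p = z * q := by exact_mod_cast hz2
    have hdvd : (q:ℤ) ∣ ((j:ℤ) - j') * p := Dvd.intro_left z hz3.symm
    have hdvd2 : (q:ℤ) ∣ ((j:ℤ) - j') := by
      have hcop' : IsCoprime ((q:ℤ)) p := by
        rw [Int.isCoprime_iff_gcd_eq_one, Int.gcd_comm]; exact hcop
      exact hcop'.dvd_of_dvd_mul_right hdvd
    have hlt : |(j:ℤ) - j'| < q := by
      simp only [mem_range] at hj hj'
      rw [abs_lt]; omega
    have : (j:ℤ) - j' = 0 := by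
      by_contra h
      have := Int.le_of_dvd (abs_pos.mpr h) ((dvd_abs ((q:ℤ)) _).mpr hdvd2)
      omega
    omega
  set φ : ℕ → ℕ := fun j => (I j).toNat with hφ
  have hφinj : ∀ j ∈ range q, ∀ j' ∈ range q, φ j = φ j' → j = j' := by
    intro j hj j' hj' h
    apply hinj j hj j' hj'
    simp only [hφ] at h
    have h1 := hI0 j; have h2 := hI0 j'
    omega
  have hφmem : ∀ j ∈ range q, φ j ∈ range q := by
    intro j _
    have h1 := hIlt j; have h2 := hI0 j
    simp only [mem_range, hφ]; omega
  have himg : Finset.image φ (range q) = range q := by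
    apply Finset.eq_of_subset_of_card_le
    · intro k hk
      obtain ⟨j, hj, rfl⟩ := Finset.mem_image.mp hk
      exact hφmem j hj
    · rw [Finset.card_image_of_injOn (fun x hx y hy h => hφinj x hx y hy h)]
  have hIφ : ∀ j, ((I j : ℝ)) = (φ j : ℝ) := by
    intro j
    simp only [hφ]
    exact_mod_cast (Int.toNat_of_nonneg (hI0 j)).symm
  have hsumI : ∑ j ∈ range q, ((I j : ℝ)) = (q:ℝ)*((q:ℝ)-1)/2 := by
    have h1 : ∑ k ∈ (range q).image φ, (k:ℝ) = ∑ j ∈ range q, ((φ j : ℕ):ℝ) :=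
      Finset.sum_image (fun x hx y hy h => hφinj x hx y hy h)
    rw [himg] at h1
    have hgauss := Finset.sum_range_id_mul_two q
    have h2 : (∑ k ∈ range q, (k:ℝ)) * 2 = (q:ℝ) * ((q:ℝ)-1) := by
      calc (∑ k ∈ range q, (k:ℝ)) * 2 = (((∑ i ∈ range q, i) * 2 : ℕ) : ℝ) := by
            push_cast; ring
        _ = ((q * (q - 1) : ℕ) : ℝ) := by rw [hgauss]
        _ = (q:ℝ) * ((q:ℝ)-1) := by push_cast [Nat.cast_sub hq]; ring
    have h3 : ∑ j ∈ range q, ((I j : ℝ)) = ∑ k ∈ range q, (k:ℝ) :=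
      (Finset.sum_congr rfl (fun j _ => hIφ j)).trans h1.symm
    rw [h3]; linarith
  have hsumu : ∑ j ∈ range q, Int.fract (u j) = f + ((q:ℝ)-1)/2 := by
    have h4 : ∑ j ∈ range q, Int.fract (u j) = ∑ j ∈ range q, (f + (I j : ℝ))/q :=
      Finset.sum_congr rfl (fun j _ => hdecomp j)
    rw [h4, ← Finset.sum_div, Finset.sum_add_distrib, Finset.sum_const, card_range,
      nsmul_eq_mul, hsumI]
    field_simp
  set B : Finset ℕ := (range q).filter (fun j => I j = 0 ∨ I j = (q:ℤ)-1) with hB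
  have hcardB : (B.card : ℝ) ≤ 2 := by
    have hc1 : B.card ≤ ({0, (q:ℤ)-1} : Finset ℤ).card := by
      apply Finset.card_le_card_of_injOn I
      · intro j hj
        have hj := Finset.mem_filter.mp hj
        rcases hj.2 with h | h <;> simp [h]
      · intro x hx y hy h
        exact hinj x (Finset.mem_of_mem_filter _ hx) y (Finset.mem_of_mem_filter _ hy) h
    have h2 : ({0, (q:ℤ)-1} : Finset ℤ).card ≤ 2 :=
      (Finset.card_insert_le _ _).trans (by simp)
    exact_mod_cast hc1.trans h2
  set d : ℕ → ℝ := fun j => Int.fract (c + j * α) - Int.fract (u j) with hd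
  have hsplit : ∀ j : ℕ, c + j * α = u j + j * δ := by
    intro j; rw [hα, hu]; ring
  have hejb : ∀ j ∈ range q, |(j:ℝ) * δ| ≤ 1/N := by
    intro j hj
    have hjq : (j:ℝ) ≤ q := by exact_mod_cast (mem_range.mp hj).le
    rw [abs_mul, abs_of_nonneg (by positivity : (0:ℝ) ≤ (j:ℝ))]
    rw [le_div_iff₀ hN0]
    have : (j:ℝ) * |δ| * N ≤ (q:ℝ) * (1/(N*q)) * N := by
      apply mul_le_mul_of_nonneg_right _ hN0.le
      calc (j:ℝ) * |δ| ≤ (q:ℝ) * |δ| := mul_le_mul_of_nonneg_right hjq (abs_nonneg _)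
        _ ≤ (q:ℝ) * (1/(N*q)) := mul_le_mul_of_nonneg_left hδ hq0.le
    calc (j:ℝ) * |δ| * N ≤ (q:ℝ) * (1/(N*q)) * N := this
      _ = 1 := by field_simp
  have hgood : ∀ j ∈ range q, j ∉ B → |d j| ≤ 1/N := by
    intro j hj hjB
    have hIj : 1 ≤ I j ∧ I j ≤ (q:ℤ) - 2 := by
      simp only [hB, Finset.mem_filter, hj, true_and] at hjB
      push_neg at hjB
      have h1 := hI0 j; have h2 := hIlt j
      omega
    have hfru := hdecomp j
    have hf0 : 0 ≤ f := Int.fract_nonneg _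
    have hf1 : f < 1 := Int.fract_lt_one _
    have hI1 : (1:ℝ) ≤ (I j : ℝ) := by exact_mod_cast hIj.1
    have hI2 : (I j : ℝ) ≤ (q:ℝ) - 2 := by
      have h5 := hIj.2
      have : ((I j : ℤ) : ℝ) ≤ (((q:ℤ) - 2 : ℤ) : ℝ) := by exact_mod_cast h5
      push_cast at this; linarith
    have habs := abs_le.mp (hejb j hj)
    have hNq : 1/(N:ℝ) ≤ 1/q := by
      apply one_div_le_one_div_of_le hq0 hqN'
    have hlow : (1:ℝ)/q ≤ Int.fract (u j) := by
      rw [hfru]; gcongr; linarith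
    have hhigh : Int.fract (u j) ≤ (f + ((q:ℝ) - 2))/q := by
      rw [hfru]; gcongr
    have h0 : 0 ≤ Int.fract (u j) + (j:ℝ) * δ := by linarith
    have h1 : Int.fract (u j) + (j:ℝ) * δ < 1 := by
      have : (f + ((q:ℝ) - 2))/q + 1/q < 1 := by
        rw [← add_div, div_lt_one hq0]
        linarith
      linarith
    have heq : d j = (j:ℝ) * δ := by
      rw [hd]
      simp only
      rw [hsplit j, fract_add_of _ _ h0 h1]
      ring
    rw [heq]
    exact hejb j hj
  have hbad : ∀ j : ℕ, |d j| ≤ 1 := by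
    intro j
    rw [hd]
    have h1 := Int.fract_nonneg (c + j * α)
    have h2 := Int.fract_lt_one (c + j * α)
    have h3 := Int.fract_nonneg (u j)
    have h4 := Int.fract_lt_one (u j)
    rw [abs_le]; constructor <;> simp only <;> linarith
  have hsumd : ∑ j ∈ range q, |d j| ≤ 3 := by
    have hsp := Finset.sum_filter_add_sum_filter_not (range q)
      (fun j => I j = 0 ∨ I j = (q:ℤ)-1) (fun j => |d j|)
    have hb1 : ∑ j ∈ B, |d j| ≤ 2 := by
      calc ∑ j ∈ B, |d j| ≤ ∑ j ∈ B, 1 := Finset.sum_le_sum (fun j _ => hbad j)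
        _ = (B.card : ℝ) := by rw [Finset.sum_const, nsmul_eq_mul, mul_one]
        _ ≤ 2 := hcardB
    have hb2 : ∑ j ∈ (range q).filter (fun j => ¬(I j = 0 ∨ I j = (q:ℤ)-1)), |d j| ≤ 1 := by
      have hle : ∀ j ∈ (range q).filter (fun j => ¬(I j = 0 ∨ I j = (q:ℤ)-1)), |d j| ≤ 1/N := by
        intro j hj
        have hj1 := Finset.mem_of_mem_filter _ hj
        have hj2 : j ∉ B := by
          simp only [hB, Finset.mem_filter] at hj ⊢
          tauto
        exact hgood j hj1 hj2
      calc ∑ j ∈ (range q).filter (fun j => ¬(I j = 0 ∨ I j = (q:ℤ)-1)), |d j|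
          ≤ ∑ _j ∈ (range q).filter (fun j => ¬(I j = 0 ∨ I j = (q:ℤ)-1)), 1/(N:ℝ) :=
            Finset.sum_le_sum hle
        _ = ((range q).filter (fun j => ¬(I j = 0 ∨ I j = (q:ℤ)-1))).card * (1/(N:ℝ)) := by
            rw [Finset.sum_const, nsmul_eq_mul]
        _ ≤ (q:ℝ) * (1/(N:ℝ)) := by
            apply mul_le_mul_of_nonneg_right _ (by positivity)
            have := Finset.card_filter_le (range q) (fun j => ¬(I j = 0 ∨ I j = (q:ℤ)-1))
            rw [card_range] at this
            exact_mod_cast this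
        _ ≤ 1 := by rw [mul_one_div, div_le_one hN0]; exact hqN'
    calc ∑ j ∈ range q, |d j|
        = ∑ j ∈ B, |d j| + ∑ j ∈ (range q).filter (fun j => ¬(I j = 0 ∨ I j = (q:ℤ)-1)), |d j| := by
          rw [hB]; exact hsp.symm
      _ ≤ 2 + 1 := add_le_add hb1 hb2
      _ = 3 := by norm_num
  have e1 : ∑ j ∈ range q, (Int.fract (c + j * α) - 1/2)
      = (f - 1/2) + ∑ j ∈ range q, d j := by
    have e2 : ∀ j : ℕ, Int.fract (c + j * α) - 1/2 = (Int.fract (u j) - 1/2) + d j := by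
      intro j; rw [hd]; ring
    rw [Finset.sum_congr rfl (fun j _ => e2 j), Finset.sum_add_distrib,
      Finset.sum_sub_distrib, Finset.sum_const, card_range, nsmul_eq_mul, hsumu]
    ring
  rw [e1]
  have habs2 : |∑ j ∈ range q, d j| ≤ 3 :=
    (Finset.abs_sum_le_sum_abs _ _).trans hsumd
  have hf0 : 0 ≤ f := Int.fract_nonneg _
  have hf1 : f < 1 := Int.fract_lt_one _
  calc |(f - 1/2) + ∑ j ∈ range q, d j| ≤ |f - 1/2| + |∑ j ∈ range q, d j| := abs_add_le _ _
    _ ≤ 1/2 + 3 := add_le_add (abs_le.mpr ⟨by linarith, by linarith⟩) habs2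
    _ ≤ 4 := by norm_num
end Block


noncomputable def Sgen (α β : ℝ) (N : ℕ) : ℝ :=
  ∑ n ∈ Finset.range N, (Int.fract (α * ((n:ℝ)+1) + β) - 1/2)

lemma sum_mul_block (g : ℕ → ℝ) (m q : ℕ) :
    ∑ n ∈ range (m*q), g n = ∑ i ∈ range m, ∑ j ∈ range q, g (i*q + j) := by
  induction m with
  | zero => simp
  | succ m ih => rw [Nat.succ_mul, Finset.sum_range_add, ih, Finset.sum_range_succ]

lemma Sgen_decomp (α β : ℝ) (m q r : ℕ) :
    Sgen α β (m*q + r)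
      = (∑ i ∈ range m, ∑ j ∈ range q, (Int.fract ((α*((i:ℝ)*q+1)+β) + j*α) - 1/2))
        + Sgen α (β + α*(m*q)) r := by
  unfold Sgen
  rw [Finset.sum_range_add, sum_mul_block]
  congr 1
  · apply Finset.sum_congr rfl; intro i _
    apply Finset.sum_congr rfl; intro j _
    congr 2
    push_cast
    ring
  · apply Finset.sum_congr rfl; intro j _
    congr 2
    push_cast
    ring

lemma S_bound (α : ℝ) (s : ℝ) (hs : 1 < s) (c₀ : ℝ) (hc₀ : 0 < c₀)
    (hty : ∀ q : ℕ, 0 < q → c₀ / (q:ℝ) ^ s ≤ nint ((q:ℝ) * α)) :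
    ∃ A : ℝ, 0 < A ∧ ∀ N : ℕ, ∀ β : ℝ, |Sgen α β N| ≤ A * (N:ℝ) ^ (1 - 1/s) := by
  set θ : ℝ := 1 - 1/s with hθ
  have hs0 : 0 < s := by linarith
  have hθ0 : 0 < θ := by
    rw [hθ, sub_pos]
    rw [div_lt_one hs0]; exact hs
  have hθ1 : θ < 1 := by
    rw [hθ]
    have : 0 < 1/s := by positivity
    linarith
  set K : ℝ := c₀ ^ (-(1/s)) with hK
  have hK0 : 0 < K := Real.rpow_pos_of_pos hc₀ _
  have h2θ : (1/2 : ℝ) ^ θ < 1 :=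
    Real.rpow_lt_one (by norm_num) (by norm_num) hθ0
  have h2θ0 : (0:ℝ) < (1/2 : ℝ) ^ θ := Real.rpow_pos_of_pos (by norm_num) _
  set A : ℝ := 4 * K / (1 - (1/2:ℝ)^θ) with hA
  have hA0 : 0 < A := by
    apply div_pos (by positivity)
    linarith
  refine ⟨A, hA0, ?_⟩
  intro N
  induction N using Nat.strong_induction_on with
  | _ N ih =>
  intro β
  rcases Nat.eq_zero_or_pos N with rfl | hN
  · simp only [Sgen, range_zero, Finset.sum_empty, abs_zero, Nat.cast_zero]
    rw [Real.zero_rpow (ne_of_gt hθ0), mul_zero]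
  -- Dirichlet
  obtain ⟨j, k, hk0, hkN, hdir⟩ := Real.exists_int_int_abs_mul_sub_le α hN
  set g : ℕ := Int.gcd j k with hg
  have hg0 : 0 < g := by
    rw [hg, Int.gcd_pos_iff]
    right
    exact ne_of_gt hk0
  set p : ℤ := j / (g:ℤ) with hp
  set qZ : ℤ := k / (g:ℤ) with hqZ
  have hgj : (g:ℤ) * p = j := Int.mul_ediv_cancel' (Int.gcd_dvd_left j k)
  have hgk : (g:ℤ) * qZ = k := Int.mul_ediv_cancel' (Int.gcd_dvd_right j k)
  have hg0' : (0:ℤ) < (g:ℤ) := by exact_mod_cast hg0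
  have hq0 : 0 < qZ := by
    rcases lt_trichotomy qZ 0 with h | h | h
    · nlinarith
    · rw [h] at hgk; simp at hgk; omega
    · exact h
  set q : ℕ := qZ.toNat with hq
  have hqZq : (q : ℤ) = qZ := Int.toNat_of_nonneg hq0.le
  have hq1 : 1 ≤ q := by omega
  have hqN : q ≤ N := by
    have h1 : qZ ≤ k := by nlinarith
    omega
  have hcop : Int.gcd p (q:ℤ) = 1 := by
    rw [hqZq, hp, hqZ, hg]
    exact Int.gcd_div_gcd_div_gcd (by exact_mod_cast hg0)
  -- approximation quality
  have hN0 : (0:ℝ) < N := by exact_mod_cast hN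
  have hq0' : (0:ℝ) < q := by exact_mod_cast hq1
  have happ : |(q:ℝ) * α - p| ≤ 1/(N+1) := by
    have hgr : (1:ℝ) ≤ (g:ℝ) := by exact_mod_cast hg0
    have hexp : (k:ℝ) * α - j = (g:ℝ) * ((q:ℝ) * α - p) := by
      have h1 : (g:ℝ) * ((p:ℤ):ℝ) = ((j:ℤ):ℝ) := by exact_mod_cast hgj
      have h2 : (g:ℝ) * ((qZ:ℤ):ℝ) = ((k:ℤ):ℝ) := by exact_mod_cast hgk
      have h3 : ((q:ℕ):ℝ) = ((qZ:ℤ):ℝ) := by exact_mod_cast hqZq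
      rw [h3, mul_sub, ← mul_assoc, h2, h1]
    calc |(q:ℝ) * α - p| ≤ (g:ℝ) * |(q:ℝ) * α - p| := by
          nlinarith [abs_nonneg ((q:ℝ) * α - p)]
      _ = |(k:ℝ) * α - j| := by rw [hexp, abs_mul, abs_of_nonneg (by linarith : (0:ℝ) ≤ (g:ℝ))]
      _ ≤ 1/(N+1) := hdir
  have happ' : |(q:ℝ) * α - p| ≤ 1/N := by
    apply happ.trans
    apply one_div_le_one_div_of_le hN0
    linarith
  -- lower bound on q
  have hnint : nint ((q:ℝ) * α) ≤ 1/N := by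
    unfold nint
    calc |(q:ℝ)*α - round ((q:ℝ)*α)| ≤ |(q:ℝ)*α - p| := round_le _ p
      _ ≤ 1/N := happ'
  have hqlow : c₀ * N ≤ (q:ℝ) ^ s := by
    have h1 := (hty q hq1).trans hnint
    have hqs : (0:ℝ) < (q:ℝ)^s := Real.rpow_pos_of_pos hq0' _
    rw [div_le_div_iff₀ hqs hN0] at h1
    linarith
  have hqlow2 : (c₀ * N) ^ (1/s) ≤ (q:ℝ) := by
    calc (c₀ * N) ^ (1/s) ≤ ((q:ℝ)^s) ^ (1/s) :=
          Real.rpow_le_rpow (by positivity) hqlow (by positivity)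
      _ = (q:ℝ) := by
          rw [← Real.rpow_mul hq0'.le, mul_one_div_cancel (ne_of_gt hs0), Real.rpow_one]
  -- N/q ≤ K * N^θ
  have hNq : (N:ℝ)/q ≤ K * (N:ℝ)^θ := by
    have hmr : (c₀ * N) ^ (1/s) = c₀^(1/s) * (N:ℝ)^(1/s) := Real.mul_rpow hc₀.le hN0.le
    have hden : (0:ℝ) < c₀^(1/s) * (N:ℝ)^(1/s) := by
      apply mul_pos (Real.rpow_pos_of_pos hc₀ _) (Real.rpow_pos_of_pos hN0 _)
    have h1 : (N:ℝ)/q ≤ (N:ℝ)/(c₀^(1/s) * (N:ℝ)^(1/s)) := by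
      apply div_le_div_of_nonneg_left hN0.le hden
      rw [← hmr]; exact hqlow2
    have h2 : (N:ℝ)/(c₀^(1/s) * (N:ℝ)^(1/s)) = K * (N:ℝ)^θ := by
      rw [hK, Real.rpow_neg hc₀.le, hθ, Real.rpow_sub hN0, Real.rpow_one]
      field_simp
    rw [h2] at h1; exact h1
  -- split
  set m : ℕ := N / q with hm
  set r : ℕ := N % q with hr
  have hm1 : 1 ≤ m := (Nat.one_le_div_iff (by omega)).mpr hqN
  have hNmr : m * q + r = N := by
    rw [hm, hr]; exact Nat.div_add_mod' N q
  have hrN : r < N := by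
    have : r < q := Nat.mod_lt _ (by omega)
    omega
  have hr2 : 2 * r ≤ N := by
    have h1 : r < q := Nat.mod_lt _ (by omega)
    have h2 : q ≤ m * q := Nat.le_mul_of_pos_left q hm1
    omega
  -- block bounds
  set δ : ℝ := α - (p:ℝ)/q with hδdef
  have hα : α = (p:ℝ)/q + δ := by rw [hδdef]; ring
  have hδ : |δ| ≤ 1/((N:ℝ)*q) := by
    have : δ = ((q:ℝ)*α - p)/q := by rw [hδdef]; field_simp
    rw [this, abs_div, abs_of_nonneg hq0'.le, div_le_div_iff₀ hq0' (by positivity)]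
    have h9 : |(q:ℝ)*α - p| * ((N:ℝ)*q) ≤ (1/N) * ((N:ℝ)*q) :=
      mul_le_mul_of_nonneg_right happ' (by positivity)
    have h10 : (1/(N:ℝ))*((N:ℝ)*q) = q := by field_simp
    rw [one_mul]
    linarith
  have hblocks : ∀ i : ℕ, |∑ j' ∈ range q, (Int.fract ((α*((i:ℝ)*q+1)+β) + j'*α) - 1/2)| ≤ 4 :=
    fun i => block_bound α (α*((i:ℝ)*q+1)+β) p q N hq1 hqN hcop δ hδ hα
  have hdecsum := Sgen_decomp α β m q r
  rw [hNmr] at hdecsum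
  have hstep : |Sgen α β N| ≤ 4 * m + |Sgen α (β + α*(m*q)) r| := by
    rw [hdecsum]
    refine (abs_add_le _ _).trans (add_le_add_left ?_ _)
    refine (Finset.abs_sum_le_sum_abs _ _).trans ?_
    calc ∑ i ∈ range m, |∑ j' ∈ range q, (Int.fract ((α*((i:ℝ)*q+1)+β) + j'*α) - 1/2)|
        ≤ ∑ _i ∈ range m, (4:ℝ) := Finset.sum_le_sum (fun i _ => hblocks i)
      _ = 4 * m := by rw [Finset.sum_const, card_range, nsmul_eq_mul]; ring
  have hrec := ih r hrN (β + α*(m*q))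
  have hm_le : (m:ℝ) ≤ (N:ℝ)/q := by
    rw [le_div_iff₀ hq0']
    exact_mod_cast Nat.div_mul_le_self N q
  have hrθ : (r:ℝ)^θ ≤ (1/2:ℝ)^θ * (N:ℝ)^θ := by
    have h1 : (r:ℝ) ≤ (1/2) * N := by
      have : (2*r : ℕ) ≤ N := hr2
      have h2 : (2:ℝ)*r ≤ N := by exact_mod_cast this
      linarith
    calc (r:ℝ)^θ ≤ ((1/2) * (N:ℝ))^θ :=
          Real.rpow_le_rpow (by positivity) h1 hθ0.le
      _ = (1/2:ℝ)^θ * (N:ℝ)^θ := Real.mul_rpow (by norm_num) (by positivity)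
  calc |Sgen α β N| ≤ 4 * m + |Sgen α (β + α*(m*q)) r| := hstep
    _ ≤ 4 * ((N:ℝ)/q) + A * (r:ℝ)^θ := by
        apply add_le_add _ hrec
        linarith [hm_le]
    _ ≤ 4 * (K * (N:ℝ)^θ) + A * ((1/2:ℝ)^θ * (N:ℝ)^θ) := by
        apply add_le_add
        · linarith [hNq]
        · apply mul_le_mul_of_nonneg_left hrθ hA0.le
    _ = (4*K + A * (1/2:ℝ)^θ) * (N:ℝ)^θ := by ring
    _ = A * (N:ℝ)^θ := by
        congr 1
        have hx : (1 : ℝ) - (1/2:ℝ)^θ ≠ 0 := ne_of_gt (by linarith)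
        rw [hA]
        field_simp
        ring

lemma fract_shift_up (x c : ℝ) (h0 : 0 ≤ Int.fract x - c) (h1 : Int.fract x - c < 1) :
    Int.fract (x - c) = Int.fract x - c := by
  rw [sub_eq_add_neg, fract_add_of x (-c) (by linarith) (by linarith)]; ring

lemma fract_shift_wrap (x c : ℝ) (h0 : 0 ≤ Int.fract x + 1 - c) (h1 : Int.fract x + 1 - c < 1) :
    Int.fract (x - c) = Int.fract x + 1 - c := by
  have he : x - c = (x + (1 - c)) - ((1:ℤ):ℝ) := by push_cast; ring
  rw [he, Int.fract_sub_intCast, fract_add_of x (1-c) (by linarith) (by linarith)]; ring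

lemma ind_eq (x a b : ℝ) (ha : 0 ≤ a) (hab : a < b) (hb : b ≤ 1) :
    (if Int.fract x ∈ Set.Ico a b then (1:ℝ) else 0)
      = (b - a) + (Int.fract (x - b) - Int.fract (x - a)) := by
  have hf0 := Int.fract_nonneg x
  have hf1 := Int.fract_lt_one x
  rcases lt_or_ge (Int.fract x) a with hxa | hxa
  · rw [if_neg (by simp only [Set.mem_Ico, not_and, not_lt]; intro h; linarith)]
    rw [fract_shift_wrap x b (by linarith) (by linarith),
      fract_shift_wrap x a (by linarith) (by linarith)]
    ring
  · rcases lt_or_ge (Int.fract x) b with hxb | hxb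
    · rw [if_pos (by simp only [Set.mem_Ico]; exact ⟨hxa, hxb⟩)]
      rw [fract_shift_wrap x b (by linarith) (by linarith),
        fract_shift_up x a (by linarith) (by linarith)]
      ring
    · rw [if_neg (by simp only [Set.mem_Ico, not_and, not_lt]; intro h; linarith)]
      rw [fract_shift_up x b (by linarith) (by linarith),
        fract_shift_up x a (by linarith) (by linarith)]
      ring

lemma count_formula (α β : ℝ) (N : ℕ) (a b : ℝ) (ha : 0 ≤ a) (hab : a < b) (hb : b ≤ 1) :
    (((Finset.Icc 1 N).filter
        (fun n : ℕ => Int.fract (α * (n : ℝ) + β) ∈ Set.Ico a b)).card : ℝ)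
      = N * (b - a) + Sgen α (β - b) N - Sgen α (β - a) N := by
  have h1 : (((Finset.Icc 1 N).filter
      (fun n : ℕ => Int.fract (α * (n : ℝ) + β) ∈ Set.Ico a b)).card : ℝ)
      = ∑ n ∈ Finset.Icc 1 N,
          (if Int.fract (α * (n : ℝ) + β) ∈ Set.Ico a b then (1:ℝ) else 0) := by
    rw [Finset.card_filter]
    push_cast
    rfl
  rw [h1]
  have h2 : ∀ n ∈ Finset.Icc 1 N,
      (if Int.fract (α * (n : ℝ) + β) ∈ Set.Ico a b then (1:ℝ) else 0)
        = (b - a) + (Int.fract ((α * (n : ℝ) + β) - b) - Int.fract ((α * (n : ℝ) + β) - a)) :=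
    fun n _ => ind_eq _ a b ha hab hb
  rw [Finset.sum_congr rfl h2]
  rw [← Finset.Ico_add_one_right_eq_Icc, Finset.sum_Ico_eq_sum_range]
  simp only [Nat.succ_sub_one, Nat.add_sub_cancel]
  have h3 : ∀ i ∈ range N,
      ((b - a) + (Int.fract ((α * ((1 + i : ℕ) : ℝ) + β) - b)
        - Int.fract ((α * ((1 + i : ℕ) : ℝ) + β) - a)))
      = (b - a) + ((Int.fract (α * ((i:ℝ)+1) + (β - b)) - 1/2)
          - (Int.fract (α * ((i:ℝ)+1) + (β - a)) - 1/2)) := by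
    intro i _
    have e1 : (α * ((1 + i : ℕ) : ℝ) + β) - b = α * ((i:ℝ)+1) + (β - b) := by push_cast; ring
    have e2 : (α * ((1 + i : ℕ) : ℝ) + β) - a = α * ((i:ℝ)+1) + (β - a) := by push_cast; ring
    rw [e1, e2]; ring
  rw [Finset.sum_congr rfl h3, Finset.sum_add_distrib, Finset.sum_sub_distrib,
    Finset.sum_const, card_range, nsmul_eq_mul]
  unfold Sgen
  rw [Finset.sum_sub_distrib, Finset.sum_const, card_range, nsmul_eq_mul]
  ring

lemma tau_ge_one (α τ : ℝ)
    (htype : ∀ ε : ℝ, 0 < ε → ∃ c₀ : ℝ, 0 < c₀ ∧ ∀ q : ℕ, 0 < q →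
      c₀ / (q : ℝ) ^ (τ + ε) ≤ nint ((q:ℝ) * α)) : 1 ≤ τ := by
  by_contra hτ
  push_neg at hτ
  set ε := (1 - τ)/2 with hε
  have hε0 : 0 < ε := by rw [hε]; linarith
  obtain ⟨c₀, hc₀, hty⟩ := htype ε hε0
  set s := τ + ε with hs
  have hs1 : s < 1 := by rw [hs, hε]; linarith
  have key : ∀ N : ℕ, 0 < N → ∃ q : ℕ, 1 ≤ q ∧ q ≤ N ∧ c₀ * N ≤ (q:ℝ) ^ s := by
    intro N hN
    obtain ⟨j, k, hk0, hkN, hdir⟩ := Real.exists_int_int_abs_mul_sub_le α hN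
    refine ⟨k.toNat, by omega, by omega, ?_⟩
    have hq1 : (1:ℝ) ≤ (k.toNat:ℝ) := by exact_mod_cast (by omega : 1 ≤ k.toNat)
    have hN0 : (0:ℝ) < N := by exact_mod_cast hN
    have hcast : ((k.toNat : ℕ):ℝ) = ((k:ℤ):ℝ) := by exact_mod_cast Int.toNat_of_nonneg hk0.le
    have hnint : nint ((k.toNat:ℝ) * α) ≤ 1/N := by
      unfold nint
      calc |(k.toNat:ℝ)*α - round ((k.toNat:ℝ)*α)| ≤ |(k.toNat:ℝ)*α - j| := round_le _ j
        _ = |(k:ℝ)*α - j| := by rw [hcast]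
        _ ≤ 1/(N+1) := hdir
        _ ≤ 1/N := by apply one_div_le_one_div_of_le hN0; linarith
    have h1 := (hty k.toNat (by omega)).trans hnint
    have hqs : (0:ℝ) < (k.toNat:ℝ)^s := Real.rpow_pos_of_pos (by linarith) _
    rw [div_le_div_iff₀ hqs hN0] at h1
    linarith
  rcases le_or_gt s 0 with hsle | hsgt
  · obtain ⟨N, hNgt⟩ := exists_nat_gt (1/c₀)
    have hN : 0 < N := by
      by_contra h
      push_neg at h
      interval_cases N
      · simp at hNgt; nlinarith [hc₀, hNgt]
    obtain ⟨q, hq1, hqN, hle⟩ := key N hN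
    have hq1' : (1:ℝ) ≤ (q:ℝ) := by exact_mod_cast hq1
    have hqs1 : (q:ℝ)^s ≤ 1 := Real.rpow_le_one_of_one_le_of_nonpos hq1' hsle
    have hN0 : (0:ℝ) < N := by exact_mod_cast hN
    rw [div_lt_iff₀ hc₀] at hNgt
    nlinarith
  · set M0 : ℝ := (1/c₀)^((1:ℝ)/(1-s)) + 1 with hM0
    obtain ⟨N, hNgt⟩ := exists_nat_gt M0
    have hM00 : (0:ℝ) < M0 := by positivity
    have hN : 0 < N := by
      by_contra h
      push_neg at h
      interval_cases N
      · simp at hNgt; linarith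
    have hN0 : (0:ℝ) < N := by exact_mod_cast hN
    obtain ⟨q, hq1, hqN, hle⟩ := key N hN
    have hqr : (q:ℝ) ≤ N := by exact_mod_cast hqN
    have h2 : (q:ℝ)^s ≤ (N:ℝ)^s := Real.rpow_le_rpow (by positivity) hqr hsgt.le
    have h3 : c₀ * N ≤ (N:ℝ)^s := hle.trans h2
    have hNs : (0:ℝ) < (N:ℝ)^s := Real.rpow_pos_of_pos hN0 _
    have h4 : c₀ * (N:ℝ)^(1-s) ≤ 1 := by
      have e : (N:ℝ)^(1-s) = N / (N:ℝ)^s := by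
        rw [Real.rpow_sub hN0, Real.rpow_one]
      rw [e, mul_div_assoc'] 
      rw [div_le_one hNs]
      exact h3
    have h5 : 1 < c₀ * (N:ℝ)^(1-s) := by
      have hinv : ((1/c₀)^((1:ℝ)/(1-s)))^(1-s) = 1/c₀ := by
        rw [← Real.rpow_mul (by positivity), one_div ((1:ℝ)-s),
          inv_mul_cancel₀ (by linarith : (1:ℝ)-s ≠ 0), Real.rpow_one]
      have h6 : (1/c₀) < (N:ℝ)^(1-s) := by
        rw [← hinv]
        apply Real.rpow_lt_rpow (by positivity) _ (by linarith)
        rw [hM0] at hNgt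
        linarith
      rw [div_lt_iff₀ hc₀] at h6
      nlinarith
    linarith

/-- If α is an irrational of finite type τ and x_n = αn + β, then the discrepancy
of (x_n) satisfies D_N ≤ c N^{−1/τ+ε} with c = c(α,ε) independent of β. -/
theorem stmt_13 (α : ℝ) (hα : Irrational α) (τ : ℝ)
    (htype : ∀ ε : ℝ, 0 < ε → ∃ c₀ : ℝ, 0 < c₀ ∧ ∀ q : ℕ, 0 < q →
      c₀ / (q : ℝ) ^ (τ + ε) ≤ nint (q * α)) :
    ∀ ε : ℝ, 0 < ε → ∃ c : ℝ, 0 < c ∧ ∀ β : ℝ, ∀ N : ℕ, 1 ≤ N →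
      ∀ a b : ℝ, 0 ≤ a → a < b → b ≤ 1 →
        |(((Finset.Icc 1 N).filter
            (fun n : ℕ => Int.fract (α * (n : ℝ) + β) ∈ Set.Ico a b)).card : ℝ) / N - (b - a)|
          ≤ c * (N : ℝ) ^ (-1 / τ + ε) := by
  intro ε hε
  obtain ⟨c₀, hc₀, hty⟩ := htype ε hε
  have hτ1 : 1 ≤ τ := tau_ge_one α τ htype
  have hτ0 : 0 < τ := by linarith
  have hs : 1 < τ + ε := by linarith
  have hs0 : 0 < τ + ε := by linarith
  obtain ⟨A, hA0, hS⟩ := S_bound α (τ+ε) hs c₀ hc₀ hty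
  refine ⟨2*A, by positivity, ?_⟩
  intro β N hN a b ha hab hb
  have hN0 : (0:ℝ) < N := by exact_mod_cast hN
  have hN1 : (1:ℝ) ≤ N := by exact_mod_cast hN
  set θ : ℝ := 1 - 1/(τ+ε) with hθ
  have hcount := count_formula α β N a b ha hab hb
  have hdiff : (((Finset.Icc 1 N).filter
      (fun n : ℕ => Int.fract (α * (n : ℝ) + β) ∈ Set.Ico a b)).card : ℝ) / N - (b - a)
      = (Sgen α (β - b) N - Sgen α (β - a) N) / N := by
    rw [hcount]
    field_simp
    ring
  rw [hdiff]
  have hX := hS N (β - b)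
  have hY := hS N (β - a)
  have hexp : θ - 1 ≤ -1/τ + ε := by
    have h1 : 1/τ - 1/(τ+ε) ≤ ε := by
      rw [div_sub_div _ _ (ne_of_gt hτ0) (ne_of_gt hs0)]
      have he : 1*(τ + ε) - τ*1 = ε := by ring
      rw [he]
      apply div_le_self hε.le
      nlinarith
    have h2 : (-1:ℝ)/τ = -(1/τ) := by ring
    rw [h2, hθ]
    linarith
  calc |(Sgen α (β - b) N - Sgen α (β - a) N) / N|
      = |Sgen α (β - b) N - Sgen α (β - a) N| / N := by
        rw [abs_div, abs_of_pos hN0]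
    _ ≤ (|Sgen α (β - b) N| + |Sgen α (β - a) N|) / N := by
        gcongr
        calc |Sgen α (β - b) N - Sgen α (β - a) N|
            ≤ |Sgen α (β - b) N| + |-(Sgen α (β - a) N)| := by
              rw [sub_eq_add_neg]; exact abs_add_le _ _
          _ = |Sgen α (β - b) N| + |Sgen α (β - a) N| := by rw [abs_neg]
    _ ≤ (A * (N:ℝ)^θ + A * (N:ℝ)^θ) / N := by
        gcongr
    _ = (2*A) * (N:ℝ)^(θ - 1) := by
        have he2 : (N:ℝ)^(θ-1) = (N:ℝ)^θ / N := by
          rw [Real.rpow_sub hN0, Real.rpow_one]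
        rw [he2]
        ring
    _ ≤ (2*A) * (N:ℝ)^(-1/τ + ε) := by
        apply mul_le_mul_of_nonneg_left _ (by positivity)
        exact Real.rpow_le_rpow_of_exponent_le hN1 hexp
end

section
/- Fix a nonzero ζ ∈ ℤ³ and write |ζ|² = 4^{a_ζ}·n₁^ζ with 4 ∤ n₁^ζ. If ξ ∈ ℤ³ satisfies 2⟨ξ,ζ⟩ = |ζ|², then writing |ξ|² = 4^a·n₁ with 4 ∤ n₁, one has a ≤ a_ζ. -/
lemma sq_mod_four (x : ℤ) : (x ^ 2 % 4 = 0 ∧ 2 ∣ x) ∨ (x ^ 2 % 4 = 1 ∧ ¬ 2 ∣ x) := by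
  rcases Int.even_or_odd x with ⟨k, hk⟩ | ⟨k, hk⟩
  · left
    constructor
    · have : x ^ 2 = 4 * k ^ 2 := by rw [hk]; ring
      omega
    · exact ⟨k, by omega⟩
  · right
    constructor
    · have : x ^ 2 = 4 * (k ^ 2 + k) + 1 := by rw [hk]; ring
      omega
    · omega

lemma four_dvd_sum_sq {x y z : ℤ} (h : (4 : ℤ) ∣ x ^ 2 + y ^ 2 + z ^ 2) :
    2 ∣ x ∧ 2 ∣ y ∧ 2 ∣ z := by
  have hx := sq_mod_four x
  have hy := sq_mod_four y
  have hz := sq_mod_four z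
  omega

lemma key_dvd (a : ℕ) : ∀ x y z : ℤ, (4 : ℤ) ^ a ∣ x ^ 2 + y ^ 2 + z ^ 2 →
    (2 : ℤ) ^ a ∣ x ∧ (2 : ℤ) ^ a ∣ y ∧ (2 : ℤ) ^ a ∣ z := by
  induction a with
  | zero => intro x y z _; simp
  | succ n ih =>
    intro x y z h
    have h4 : (4 : ℤ) ∣ x ^ 2 + y ^ 2 + z ^ 2 :=
      dvd_trans (dvd_pow_self 4 (Nat.succ_ne_zero n)) h
    obtain ⟨⟨x', hx⟩, ⟨y', hy⟩, ⟨z', hz⟩⟩ := four_dvd_sum_sq h4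
    have hsum : x ^ 2 + y ^ 2 + z ^ 2 = 4 * (x' ^ 2 + y' ^ 2 + z' ^ 2) := by
      rw [hx, hy, hz]; ring
    have h' : (4 : ℤ) ^ n ∣ x' ^ 2 + y' ^ 2 + z' ^ 2 := by
      have : (4 : ℤ) * 4 ^ n ∣ 4 * (x' ^ 2 + y' ^ 2 + z' ^ 2) := by
        rw [← hsum, ← pow_succ']; exact h
      exact (mul_dvd_mul_iff_left (by norm_num : (4:ℤ) ≠ 0)).mp this
    obtain ⟨hx', hy', hz'⟩ := ih x' y' z' h'
    refine ⟨?_, ?_, ?_⟩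
    · rw [hx, pow_succ']; exact mul_dvd_mul_left 2 hx'
    · rw [hy, pow_succ']; exact mul_dvd_mul_left 2 hy'
    · rw [hz, pow_succ']; exact mul_dvd_mul_left 2 hz'

/-- If ζ ≠ 0 with |ζ|² = 4^{a_ζ} n₁^ζ (4 ∤ n₁^ζ), and ξ satisfies 2⟨ξ,ζ⟩ = |ζ|²,
then writing |ξ|² = 4^a n₁ with 4 ∤ n₁ one has a ≤ a_ζ. -/
theorem stmt_15 (ζ ξ : ℤ × ℤ × ℤ) (hζ : ζ ≠ 0)
    (aζ : ℕ) (n₁ζ : ℤ) (hζdec : ζ.1 ^ 2 + ζ.2.1 ^ 2 + ζ.2.2 ^ 2 = 4 ^ aζ * n₁ζ)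
    (hζ4 : ¬ (4 : ℤ) ∣ n₁ζ)
    (a : ℕ) (n₁ : ℤ) (hξdec : ξ.1 ^ 2 + ξ.2.1 ^ 2 + ξ.2.2 ^ 2 = 4 ^ a * n₁)
    (hξ4 : ¬ (4 : ℤ) ∣ n₁)
    (hinner : 2 * (ξ.1 * ζ.1 + ξ.2.1 * ζ.2.1 + ξ.2.2 * ζ.2.2) =
      ζ.1 ^ 2 + ζ.2.1 ^ 2 + ζ.2.2 ^ 2) :
    a ≤ aζ := by
  by_contra hlt
  push_neg at hlt
  -- 4^(aζ+1) divides |ξ|²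
  have hdξ : (4 : ℤ) ^ (aζ + 1) ∣ ξ.1 ^ 2 + ξ.2.1 ^ 2 + ξ.2.2 ^ 2 := by
    rw [hξdec]
    exact dvd_mul_of_dvd_left (pow_dvd_pow 4 (by omega)) _
  obtain ⟨⟨u, hu⟩, ⟨v, hv⟩, ⟨w, hw⟩⟩ := key_dvd (aζ + 1) _ _ _ hdξ
  have hdζ : (4 : ℤ) ^ aζ ∣ ζ.1 ^ 2 + ζ.2.1 ^ 2 + ζ.2.2 ^ 2 := by
    rw [hζdec]; exact dvd_mul_right _ _
  obtain ⟨⟨p, hp⟩, ⟨q, hq⟩, ⟨r, hr⟩⟩ := key_dvd aζ _ _ _ hdζ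
  apply hζ4
  refine ⟨u * p + v * q + w * r, ?_⟩
  -- from hinner: 4^aζ * 4 * S = 4^aζ * n₁ζ
  have e1 : 2 * (ξ.1 * ζ.1 + ξ.2.1 * ζ.2.1 + ξ.2.2 * ζ.2.2)
      = 4 ^ aζ * (4 * (u * p + v * q + w * r)) := by
    rw [hu, hv, hw, hp, hq, hr]
    have h2 : (2:ℤ) * (2 ^ (aζ + 1) * u * (2 ^ aζ * p) + 2 ^ (aζ + 1) * v * (2 ^ aζ * q)
        + 2 ^ (aζ + 1) * w * (2 ^ aζ * r))
        = (2 ^ aζ * 2 ^ aζ) * (4 * (u * p + v * q + w * r)) := by ring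
    rw [h2, ← pow_add, ← two_mul]
    norm_num [pow_mul]
  have e2 : (4:ℤ) ^ aζ * (4 * (u * p + v * q + w * r)) = 4 ^ aζ * n₁ζ := by
    rw [← e1, hinner, hζdec]
  have := mul_left_cancel₀ (a := (4:ℤ) ^ aζ) (by positivity) e2
  linarith
end
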